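/- arXiv:2012.09482 — 3 statements merged into one kernel-verified Lean document; each statement's English description precedes it below -/
import Mathlib

section
/- Let (X,d) be a compact metric space, T: X → X continuous, and Z ⊆ X a nonempty set whose closure contains the non-wandering set Ω(T,X). Then the upper capacity topological entropy of T on Z equals the topological entropy of (X,T). -/
open Filter MeasureTheory Topology
open scoped ENNReal

variable {X : Type*} [MetricSpace X]


/-- The (open) Bowen ball of length `n` and radius `ε`. -/
def bowenBall (T : X → X) (x : X) (n : ℕ) (ε : ℝ) : Set X :=
  {y | ∀ i < n, dist (T^[i] x) (T^[i] y) < ε}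

/-- The closed Bowen ball of length `n` and radius `ε`. -/
def closedBowenBall (T : X → X) (x : X) (n : ℕ) (ε : ℝ) : Set X :=
  {y | ∀ i < n, dist (T^[i] x) (T^[i] y) ≤ ε}

/-- `E` is an `(n,ε)`-separated set for `T`. -/
def IsSep (T : X → X) (n : ℕ) (ε : ℝ) (E : Finset X) : Prop :=
  ∀ x ∈ E, ∀ y ∈ E, x ≠ y → ∃ i < n, ε < dist (T^[i] x) (T^[i] y)

/-- Maximal cardinality of an `(n,ε)`-separated subset of `Z`. -/
noncomputable def sepNum (T : X → X) (Z : Set X) (n : ℕ) (ε : ℝ) : ℕ :=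
  sSup {k | ∃ E : Finset X, ↑E ⊆ Z ∧ IsSep T n ε E ∧ E.card = k}

/-- Upper capacity topological entropy of `T` on `Z`. -/
noncomputable def ucEntropy (T : X → X) (Z : Set X) : EReal :=
  ⨆ (ε : ℝ) (_ : 0 < ε),
    Filter.limsup (fun n : ℕ => ((Real.log (sepNum T Z n ε) / n : ℝ) : EReal)) Filter.atTop

/-- The Carathéodory sum `M^s_{N,ε}(Z)` for Bowen entropy. -/
noncomputable def bowenM (T : X → X) (Z : Set X) (s : ℝ) (N : ℕ) (ε : ℝ) : ℝ≥0∞ :=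
  ⨅ (c : Set (X × ℕ)) (_ : c.Countable ∧ (∀ p ∈ c, N ≤ p.2) ∧
      Z ⊆ ⋃ p ∈ c, bowenBall T p.1 p.2 ε),
    ∑' p : c, ENNReal.ofReal (Real.exp (-s * ((p : X × ℕ).2 : ℝ)))

/-- `M^s_ε(Z) = lim_N M^s_{N,ε}(Z)` (the limit is the supremum by monotonicity). -/
noncomputable def bowenMs (T : X → X) (Z : Set X) (s : ℝ) (ε : ℝ) : ℝ≥0∞ :=
  ⨆ N : ℕ, bowenM T Z s N ε

/-- Bowen topological entropy of `T` on `Z`. -/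
noncomputable def bowenEntropy (T : X → X) (Z : Set X) : EReal :=
  ⨆ (ε : ℝ) (_ : 0 < ε), sInf ((fun s : ℝ => (s : EReal)) '' {s : ℝ | bowenMs T Z s ε = 0})

/-- The packing pre-sum `P^s_{N,ε}(Z)`, a supremum over disjoint families of closed
Bowen balls with centers in `Z` and lengths at least `N`. -/
noncomputable def packP (T : X → X) (Z : Set X) (s : ℝ) (N : ℕ) (ε : ℝ) : ℝ≥0∞ :=
  ⨆ (c : Set (X × ℕ)) (_ : c.Countable ∧ (∀ p ∈ c, p.1 ∈ Z ∧ N ≤ p.2) ∧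
      c.PairwiseDisjoint (fun p => closedBowenBall T p.1 p.2 ε)),
    ∑' p : c, ENNReal.ofReal (Real.exp (-s * ((p : X × ℕ).2 : ℝ)))

/-- `P^s_ε(Z) = lim_N P^s_{N,ε}(Z)` (the limit is the infimum by monotonicity). -/
noncomputable def packPre (T : X → X) (Z : Set X) (s : ℝ) (ε : ℝ) : ℝ≥0∞ :=
  ⨅ N : ℕ, packP T Z s N ε

/-- The packing outer quantity `𝒫^s_ε(Z)`. -/
noncomputable def packM (T : X → X) (Z : Set X) (s : ℝ) (ε : ℝ) : ℝ≥0∞ :=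
  ⨅ (c : ℕ → Set X) (_ : Z ⊆ ⋃ i, c i), ∑' i, packPre T (c i) s ε

/-- Packing topological entropy of `T` on `Z`. -/
noncomputable def packEntropy (T : X → X) (Z : Set X) : EReal :=
  ⨆ (ε : ℝ) (_ : 0 < ε), sInf ((fun s : ℝ => (s : EReal)) '' {s : ℝ | packM T Z s ε = 0})
lemma isOpen_bowenBall {T : X → X} (hT : Continuous T) {x : X} {n : ℕ} {ε : ℝ} :
    IsOpen (bowenBall T x n ε) := by
  have : bowenBall T x n ε = ⋂ i ∈ Finset.range n, (T^[i]) ⁻¹' (Metric.ball (T^[i] x) ε) := by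
    ext y
    simp only [bowenBall, Set.mem_setOf_eq, Set.mem_iInter, Set.mem_preimage,
      Metric.mem_ball, Finset.mem_range]
    constructor
    · intro h i hi; rw [dist_comm]; exact h i hi
    · intro h i hi; rw [dist_comm]; exact h i hi
  rw [this]
  exact isOpen_biInter_finset fun i _ =>
    (hT.iterate i).isOpen_preimage _ Metric.isOpen_ball

/-- In a compact space, cardinalities of `(m,ε)`-separated sets are uniformly bounded. -/
lemma sep_card_bound [CompactSpace X] {T : X → X} (hT : Continuous T) {m : ℕ} {ε : ℝ}
    (hε : 0 < ε) : ∃ M : ℕ, ∀ E : Finset X, IsSep T m ε E → E.card ≤ M := by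
  classical
  obtain ⟨t, ht⟩ := IsCompact.elim_finite_subcover (isCompact_univ (X := X))
      (fun x : X => bowenBall T x m (ε/2)) (fun x => isOpen_bowenBall hT)
      (by intro x _; exact Set.mem_iUnion.2 ⟨x, fun i _ => by simp [half_pos hε]⟩)
  refine ⟨t.card, fun E hE => ?_⟩
  have hc : ∀ e : X, ∃ x, x ∈ t ∧ e ∈ bowenBall T x m (ε/2) := by
    intro e
    have := ht (Set.mem_univ e)
    simpa using this
  choose g hg1 hg2 using hc
  refine Finset.card_le_card_of_injOn g (fun e _ => hg1 e) ?_
  intro e1 he1 e2 he2 hgeq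
  by_contra hne
  obtain ⟨i, hi, hdist⟩ := hE e1 he1 e2 he2 hne
  have h1 := hg2 e1 i hi
  have h2 := hg2 e2 i hi
  rw [hgeq] at h1
  have : dist (T^[i] e1) (T^[i] e2) < ε := by
    calc dist (T^[i] e1) (T^[i] e2) ≤ dist (T^[i] e1) (T^[i] (g e2)) + dist (T^[i] (g e2)) (T^[i] e2) :=
      dist_triangle _ _ _
    _ < ε/2 + ε/2 := by rw [dist_comm] at h1; exact add_lt_add h1 h2
    _ = ε := add_halves ε
  exact absurd hdist (not_lt.2 this.le)

/-- Existence of a maximal separated subset of `Z` realizing `sepNum`, which spans `Z`. -/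
lemma exists_max_sep [CompactSpace X] {T : X → X} (hT : Continuous T) {Z : Set X}
    (hZ : Z.Nonempty) {m : ℕ} {ε : ℝ} (hε : 0 < ε) :
    ∃ F : Finset X, ↑F ⊆ Z ∧ IsSep T m ε F ∧ F.card = sepNum T Z m ε ∧ 1 ≤ F.card ∧
      ∀ z ∈ Z, ∃ y ∈ F, ∀ i < m, dist (T^[i] y) (T^[i] z) ≤ ε := by
  classical
  obtain ⟨M, hM⟩ := sep_card_bound hT hε (m := m)
  set 𝒮 : Set ℕ := {k | ∃ E : Finset X, ↑E ⊆ Z ∧ IsSep T m ε E ∧ E.card = k} with h𝒮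
  have hne : 𝒮.Nonempty := ⟨0, ∅, by simp, fun x hx => by simp at hx, rfl⟩
  have hbdd : BddAbove 𝒮 := ⟨M, fun k ⟨E, _, hsep, hcard⟩ => hcard ▸ hM E hsep⟩
  have hmem : sSup 𝒮 ∈ 𝒮 := Nat.sSup_mem hne hbdd
  obtain ⟨F, hFZ, hFsep, hFcard⟩ := hmem
  have hone : 1 ≤ sepNum T Z m ε := by
    refine le_csSup hbdd ⟨{hZ.some}, by simp [hZ.some_mem], ?_, rfl⟩
    intro x hx y hy hne'
    simp only [Finset.mem_singleton] at hx hy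
    exact absurd (hx.trans hy.symm) hne'
  refine ⟨F, hFZ, hFsep, hFcard, hFcard ▸ hone, ?_⟩
  intro z hz
  by_contra hcon
  push_neg at hcon
  have hzF : z ∉ F := by
    intro hzF
    obtain ⟨i, _, hlt⟩ := hcon z hzF
    simp at hlt; linarith
  have hsep' : IsSep T m ε (insert z F) := by
    intro x hx y hy hxy
    rcases Finset.mem_insert.1 hx with hx1 | hx2
    · rcases Finset.mem_insert.1 hy with hy1 | hy2
      · exact absurd (hx1.trans hy1.symm) hxy
      · obtain ⟨i, hi, h⟩ := hcon y hy2
        subst hx1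
        exact ⟨i, hi, by rwa [dist_comm]⟩
    · rcases Finset.mem_insert.1 hy with hy1 | hy2
      · obtain ⟨i, hi, h⟩ := hcon x hx2
        subst hy1
        exact ⟨i, hi, h⟩
      · exact hFsep x hx2 y hy2 hxy
  have : (insert z F).card ∈ 𝒮 := ⟨insert z F, by
    rw [Finset.coe_insert]; exact Set.insert_subset hz hFZ, hsep', rfl⟩
  have hle := le_csSup hbdd this
  rw [Finset.card_insert_of_notMem hzF, ← hFcard] at hle
  omega


section Coding

set_option linter.unusedSectionVars false

variable (T : X → X) (U : Set X) (m : ℕ)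

open Classical in
/-- One greedy step: advance by `m` if the current point is in `U`, else by `1`. -/
noncomputable def bsStep (x : X) (t : ℕ) : ℕ := t + if T^[t] x ∈ U then m else 1

/-- Greedy block starts. -/
noncomputable def bs (x : X) (k : ℕ) : ℕ := (bsStep T U m x)^[k] 0

lemma bs_zero (x : X) : bs T U m x 0 = 0 := rfl

lemma bs_succ (x : X) (k : ℕ) :
    bs T U m x (k + 1) = bsStep T U m x (bs T U m x k) :=
  Function.iterate_succ_apply' _ _ _

lemma bsStep_mem {x : X} {t : ℕ} (h : T^[t] x ∈ U) : bsStep T U m x t = t + m := by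
  simp [bsStep, h]

lemma bsStep_not_mem {x : X} {t : ℕ} (h : T^[t] x ∉ U) : bsStep T U m x t = t + 1 := by
  simp [bsStep, h]

lemma bs_lt_succ (hm : 1 ≤ m) (x : X) (k : ℕ) : bs T U m x k < bs T U m x (k + 1) := by
  rw [bs_succ]
  unfold bsStep
  split <;> omega

lemma bs_strictMono (hm : 1 ≤ m) (x : X) : StrictMono (bs T U m x) :=
  strictMono_nat_of_lt_succ (bs_lt_succ T U m hm x)

lemma le_bs (hm : 1 ≤ m) (x : X) (k : ℕ) : k ≤ bs T U m x k := by
  induction k with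
  | zero => simp [bs_zero]
  | succ k ih => have := bs_lt_succ T U m hm x k; omega

open Classical in
/-- Indices of "wandering" (length-one) blocks. -/
noncomputable def Sset (n : ℕ) (x : X) : Finset ℕ :=
  (Finset.range n).filter fun k => bs T U m x k < n ∧ T^[bs T U m x k] x ∉ U

open Classical in
/-- Indices of "spanning" (length-`m`) blocks. -/
noncomputable def Phiset (n : ℕ) (x : X) : Finset ℕ :=
  (Finset.range n).filter fun k => bs T U m x k < n ∧ T^[bs T U m x k] x ∈ U

lemma mem_Sset (hm : 1 ≤ m) {n k : ℕ} {x : X} :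
    k ∈ Sset T U m n x ↔ bs T U m x k < n ∧ T^[bs T U m x k] x ∉ U := by
  simp only [Sset, Finset.mem_filter, Finset.mem_range]
  exact ⟨fun h => h.2, fun h => ⟨lt_of_le_of_lt (le_bs T U m hm x k) h.1, h⟩⟩

lemma mem_Phiset (hm : 1 ≤ m) {n k : ℕ} {x : X} :
    k ∈ Phiset T U m n x ↔ bs T U m x k < n ∧ T^[bs T U m x k] x ∈ U := by
  simp only [Phiset, Finset.mem_filter, Finset.mem_range]
  exact ⟨fun h => h.2, fun h => ⟨lt_of_le_of_lt (le_bs T U m hm x k) h.1, h⟩⟩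

open Classical in
/-- The labelled wandering blocks. -/
noncomputable def SKcode (vF : X → X) (n : ℕ) (x : X) : Finset (ℕ × X) :=
  (Sset T U m n x).image fun k => (k, vF (T^[bs T U m x k] x))

/-- The list of labels of spanning blocks, in block order. -/
noncomputable def lstF (yF : X → X) (n : ℕ) (x : X) : List X :=
  ((Phiset T U m n x).sort (· ≤ ·)).map fun k => yF (T^[bs T U m x k] x)

lemma SKcode_image_fst (vF : X → X) (n : ℕ) (x : X) :
    (SKcode T U m vF n x).image Prod.fst = Sset T U m n x := by
  classical
  rw [SKcode, Finset.image_image]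
  exact Finset.image_id

lemma card_Sset_le (hm : 1 ≤ m) {tfin : Finset X} {V : X → Set X} {vF : X → X}
    (hvF : ∀ p ∉ U, vF p ∈ tfin ∧ p ∈ V (vF p))
    (hV1 : ∀ v ∈ tfin, ∀ k, 1 ≤ k → ∀ y ∈ V v, T^[k] y ∉ V v)
    (n : ℕ) (x : X) : (Sset T U m n x).card ≤ tfin.card := by
  refine Finset.card_le_card_of_injOn (fun k => vF (T^[bs T U m x k] x)) ?_ ?_
  · intro k hk
    exact (hvF _ ((mem_Sset T U m hm).1 hk).2).1
  · intro k hk k' hk' heq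
    by_contra hne
    -- wlog k < k'
    have key : ∀ a b : ℕ, a ∈ Sset T U m n x → b ∈ Sset T U m n x →
        vF (T^[bs T U m x a] x) = vF (T^[bs T U m x b] x) → a < b → False := by
      intro a b ha hb hab hlt
      set p := T^[bs T U m x a] x with hp
      set q := T^[bs T U m x b] x with hq
      have hpU : p ∉ U := ((mem_Sset T U m hm).1 ha).2
      have hqU : q ∉ U := ((mem_Sset T U m hm).1 hb).2
      have hvp := hvF p hpU
      have hvq := hvF q hqU
      have hbslt : bs T U m x a < bs T U m x b := bs_strictMono T U m hm x hlt
      have hiter : T^[bs T U m x b - bs T U m x a] p = q := by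
        rw [hp, ← Function.iterate_add_apply]
        congr 1
        omega
      have := hV1 (vF p) hvp.1 (bs T U m x b - bs T U m x a) (by omega) p hvp.2
      rw [hiter] at this
      rw [hab] at this
      exact this hvq.2
    rcases lt_or_gt_of_ne hne with h | h
    · exact key k k' hk hk' heq h
    · exact key k' k hk' hk heq.symm h

lemma card_Phiset_le (hm : 1 ≤ m) (n : ℕ) (x : X) :
    (Phiset T U m n x).card ≤ n / m + 1 := by
  classical
  have key : ∀ K : ℕ, m * ((Phiset T U m n x) ∩ Finset.range K).card ≤ bs T U m x K := by
    intro K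
    induction K with
    | zero => simp
    | succ K ih =>
      by_cases hK : K ∈ Phiset T U m n x
      · have hins : (Phiset T U m n x) ∩ Finset.range (K + 1) =
            insert K ((Phiset T U m n x) ∩ Finset.range K) := by
          ext k
          simp only [Finset.mem_inter, Finset.mem_range, Finset.mem_insert]
          constructor
          · rintro ⟨h1, h2⟩
            rcases Nat.lt_succ_iff_lt_or_eq.1 h2 with h | h
            · exact Or.inr ⟨h1, h⟩
            · exact Or.inl h
          · rintro (h | ⟨h1, h2⟩)
            · exact ⟨by rw [h]; exact hK, by omega⟩
            · exact ⟨h1, h2.trans (Nat.lt_succ_self K)⟩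
        have hstep : bs T U m x (K + 1) = bs T U m x K + m := by
          rw [bs_succ]
          exact bsStep_mem T U m ((mem_Phiset T U m hm).1 hK).2
        have hcard := Finset.card_insert_le K ((Phiset T U m n x) ∩ Finset.range K)
        rw [hins, hstep]
        have h2 : m * (insert K ((Phiset T U m n x) ∩ Finset.range K)).card
            ≤ m * (((Phiset T U m n x) ∩ Finset.range K).card + 1) :=
          Nat.mul_le_mul_left m hcard
        have h3 : m * (((Phiset T U m n x) ∩ Finset.range K).card + 1)
            = m * ((Phiset T U m n x) ∩ Finset.range K).card + m := by ring
        omega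
      · have hins : (Phiset T U m n x) ∩ Finset.range (K + 1) =
            (Phiset T U m n x) ∩ Finset.range K := by
          ext k
          simp only [Finset.mem_inter, Finset.mem_range]
          constructor
          · rintro ⟨h1, h2⟩
            rcases Nat.lt_succ_iff_lt_or_eq.1 h2 with h | h
            · exact ⟨h1, h⟩
            · exact absurd (h ▸ h1) hK
          · rintro ⟨h1, h2⟩
            exact ⟨h1, h2.trans (Nat.lt_succ_self K)⟩
        rw [hins]
        exact ih.trans (bs_lt_succ T U m hm x K).le
  by_cases hP : (Phiset T U m n x).Nonempty
  · set K₀ := (Phiset T U m n x).max' hP with hK₀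
    have hK₀mem : K₀ ∈ Phiset T U m n x := (Phiset T U m n x).max'_mem hP
    have hbsK₀ : bs T U m x K₀ < n := ((mem_Phiset T U m hm).1 hK₀mem).1
    have herase : (Phiset T U m n x) ∩ Finset.range K₀ = (Phiset T U m n x).erase K₀ := by
      ext k
      simp only [Finset.mem_inter, Finset.mem_range, Finset.mem_erase]
      constructor
      · rintro ⟨h1, h2⟩; exact ⟨by omega, h1⟩
      · rintro ⟨h1, h2⟩
        have := (Phiset T U m n x).le_max' k h2
        exact ⟨h2, by omega⟩
    have := key K₀
    rw [herase, Finset.card_erase_of_mem hK₀mem] at this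
    have hmul : m * ((Phiset T U m n x).card - 1) ≤ n := by omega
    have hcard1 : 1 ≤ (Phiset T U m n x).card := Finset.card_pos.2 hP
    have : (Phiset T U m n x).card - 1 ≤ n / m :=
      (Nat.le_div_iff_mul_le (by omega)).2 (by rw [mul_comm]; omega)
    omega
  · rw [Finset.not_nonempty_iff_eq_empty] at hP
    simp [hP]

lemma bs_eq_of_Sset_eq (hm : 1 ≤ m) {n : ℕ} {x x' : X}
    (h : Sset T U m n x = Sset T U m n x') :
    ∀ k, bs T U m x k = bs T U m x' k ∨ (n ≤ bs T U m x k ∧ n ≤ bs T U m x' k) := by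
  intro k
  induction k with
  | zero => exact Or.inl rfl
  | succ k ih =>
    rcases ih with heq | ⟨h1, h2⟩
    · by_cases hn : n ≤ bs T U m x k
      · exact Or.inr ⟨hn.trans (bs_lt_succ T U m hm x k).le,
          (heq ▸ hn).trans (bs_lt_succ T U m hm x' k).le⟩
      · push_neg at hn
        by_cases hU : T^[bs T U m x k] x ∈ U
        · have hx : k ∉ Sset T U m n x := by
            rw [mem_Sset T U m hm]
            push_neg
            intro _; simpa using hU
          have hx' : k ∉ Sset T U m n x' := h ▸ hx
          rw [mem_Sset T U m hm] at hx'
          push_neg at hx'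
          have hU' : T^[bs T U m x' k] x' ∈ U := by
            by_contra hc
            exact hc (hx' (heq ▸ hn))
          refine Or.inl ?_
          rw [bs_succ, bs_succ, bsStep_mem T U m hU, bsStep_mem T U m hU', heq]
        · have hx : k ∈ Sset T U m n x := (mem_Sset T U m hm).2 ⟨hn, hU⟩
          have hx' : k ∈ Sset T U m n x' := h ▸ hx
          have hU' : T^[bs T U m x' k] x' ∉ U := ((mem_Sset T U m hm).1 hx').2
          refine Or.inl ?_
          rw [bs_succ, bs_succ, bsStep_not_mem T U m hU, bsStep_not_mem T U m hU', heq]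
    · exact Or.inr ⟨h1.trans (bs_lt_succ T U m hm x k).le,
        h2.trans (bs_lt_succ T U m hm x' k).le⟩

lemma Phiset_subset_of_Sset_eq (hm : 1 ≤ m) {n : ℕ} {x x' : X}
    (h : Sset T U m n x = Sset T U m n x') :
    Phiset T U m n x ⊆ Phiset T U m n x' := by
  intro k hk
  obtain ⟨hbs, hU⟩ := (mem_Phiset T U m hm).1 hk
  have heq : bs T U m x' k = bs T U m x k := by
    rcases bs_eq_of_Sset_eq T U m hm h k with he | ⟨h1, _⟩
    · exact he.symm
    · omega
  have hx : k ∉ Sset T U m n x := by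
    rw [mem_Sset T U m hm]; push_neg; intro _; simpa using hU
  have hx' : k ∉ Sset T U m n x' := h ▸ hx
  rw [mem_Sset T U m hm] at hx'
  push_neg at hx'
  have hU' : T^[bs T U m x' k] x' ∈ U := by
    by_contra hc
    exact hc (hx' (by omega))
  exact (mem_Phiset T U m hm).2 ⟨by omega, hU'⟩

lemma Phiset_eq_of_Sset_eq (hm : 1 ≤ m) {n : ℕ} {x x' : X}
    (h : Sset T U m n x = Sset T U m n x') :
    Phiset T U m n x = Phiset T U m n x' :=
  Finset.Subset.antisymm (Phiset_subset_of_Sset_eq T U m hm h)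
    (Phiset_subset_of_Sset_eq T U m hm h.symm)



lemma map_eq_map_imp {α β : Type*} (f g : α → β) :
    ∀ l : List α, l.map f = l.map g → ∀ a ∈ l, f a = g a
  | [] => by intro _ a ha; cases ha
  | b :: l => by
    intro h a ha
    simp only [List.map_cons, List.cons.injEq] at h
    rcases List.mem_cons.1 ha with rfl | ha
    · exact h.1
    · exact map_eq_map_imp f g l h.2 a ha

lemma dist_le_of_code_eq (hm : 1 ≤ m) {ε₀ : ℝ} {F tfin : Finset X} {V : X → Set X}
    {yF vF : X → X}
    (hyF : ∀ p ∈ U, yF p ∈ F ∧ ∀ i < m, dist (T^[i] (yF p)) (T^[i] p) < ε₀ / 4)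
    (hvF : ∀ p ∉ U, vF p ∈ tfin ∧ p ∈ V (vF p))
    (hV2 : ∀ v ∈ tfin, ∀ a ∈ V v, ∀ b ∈ V v, dist a b ≤ ε₀ / 2)
    {n : ℕ} {x x' : X}
    (hS : SKcode T U m vF n x = SKcode T U m vF n x')
    (hlst : lstF T U m yF n x = lstF T U m yF n x') :
    ∀ i < n, dist (T^[i] x) (T^[i] x') ≤ ε₀ / 2 := by
  classical
  have hSset : Sset T U m n x = Sset T U m n x' := by
    rw [← SKcode_image_fst T U m vF n x, ← SKcode_image_fst T U m vF n x', hS]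
  have hbs := bs_eq_of_Sset_eq T U m hm hSset
  have hPhi := Phiset_eq_of_Sset_eq T U m hm hSset
  have hlab : ∀ k ∈ Phiset T U m n x,
      yF (T^[bs T U m x k] x) = yF (T^[bs T U m x' k] x') := by
    intro k hk
    have hmm : ((Phiset T U m n x).sort (· ≤ ·)).map (fun k => yF (T^[bs T U m x k] x)) =
        ((Phiset T U m n x).sort (· ≤ ·)).map (fun k => yF (T^[bs T U m x' k] x')) := by
      have h2 := hlst
      rw [lstF, lstF, ← hPhi] at h2
      exact h2
    exact map_eq_map_imp _ _ _ hmm k (by rw [Finset.mem_sort]; exact hk)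
  have hlabK : ∀ k ∈ Sset T U m n x,
      vF (T^[bs T U m x k] x) = vF (T^[bs T U m x' k] x') := by
    intro k hk
    have hmem : (k, vF (T^[bs T U m x k] x)) ∈ SKcode T U m vF n x' := by
      rw [← hS, SKcode]
      exact Finset.mem_image_of_mem _ hk
    rw [SKcode] at hmem
    obtain ⟨k', hk', heq⟩ := Finset.mem_image.1 hmem
    rw [Prod.mk.injEq] at heq
    obtain ⟨h1, h2⟩ := heq
    exact h1 ▸ h2.symm
  intro i hi
  set k := Nat.findGreatest (fun j => bs T U m x j ≤ i) (i + 1) with hkdef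
  have hk0 : bs T U m x k ≤ i := by
    rw [hkdef]
    exact Nat.findGreatest_spec (P := fun j => bs T U m x j ≤ i) (Nat.zero_le _)
      (by show bs T U m x 0 ≤ i; rw [bs_zero]; exact Nat.zero_le i)
  have hk1 : i < bs T U m x (k + 1) := by
    by_contra hc
    push_neg at hc
    have hb : k + 1 ≤ i + 1 := by have := le_bs T U m hm x (k + 1); omega
    have hgr := Nat.findGreatest_is_greatest (P := fun j => bs T U m x j ≤ i)
      (n := i + 1) (k := k + 1) (by rw [← hkdef]; omega) hb
    exact hgr hc
  have hbsk : bs T U m x k < n := lt_of_le_of_lt hk0 hi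
  have hbs' : bs T U m x' k = bs T U m x k := by
    rcases hbs k with he | ⟨h1, _⟩
    · exact he.symm
    · omega
  by_cases hU : T^[bs T U m x k] x ∈ U
  · -- spanning block
    have hkPhi : k ∈ Phiset T U m n x := (mem_Phiset T U m hm).2 ⟨hbsk, hU⟩
    have hkPhi' : k ∈ Phiset T U m n x' := hPhi ▸ hkPhi
    have hU' : T^[bs T U m x' k] x' ∈ U := ((mem_Phiset T U m hm).1 hkPhi').2
    have hstep : bs T U m x (k + 1) = bs T U m x k + m := by
      rw [bs_succ]; exact bsStep_mem T U m hU
    have hj : i - bs T U m x k < m := by omega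
    have hiter : ∀ z : X, T^[i] z = T^[i - bs T U m x k] (T^[bs T U m x k] z) := by
      intro z
      rw [← Function.iterate_add_apply]
      congr 1
      omega
    have hy := hlab k hkPhi
    rw [hbs'] at hy hU'
    have d1 := (hyF _ hU).2 (i - bs T U m x k) hj
    have d2 := (hyF _ hU').2 (i - bs T U m x k) hj
    rw [← hy] at d2
    rw [hiter x, hiter x']
    have htri := dist_triangle (T^[i - bs T U m x k] (T^[bs T U m x k] x))
      (T^[i - bs T U m x k] (yF (T^[bs T U m x k] x)))
      (T^[i - bs T U m x k] (T^[bs T U m x k] x'))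
    rw [dist_comm] at d1
    linarith
  · -- wandering block
    have hkS : k ∈ Sset T U m n x := (mem_Sset T U m hm).2 ⟨hbsk, hU⟩
    have hkS' : k ∈ Sset T U m n x' := hSset ▸ hkS
    have hU' : T^[bs T U m x' k] x' ∉ U := ((mem_Sset T U m hm).1 hkS').2
    have hstep : bs T U m x (k + 1) = bs T U m x k + 1 := by
      rw [bs_succ]; exact bsStep_not_mem T U m hU
    have hieq : i = bs T U m x k := by omega
    have hv := hlabK k hkS
    rw [hbs'] at hv hU'
    have h1 := hvF _ hU
    have h2 := hvF _ hU'
    rw [← hv] at h2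
    rw [hieq]
    exact hV2 _ h1.1 _ h1.2 _ h2.2

lemma coding_card_bound (hm : 1 ≤ m) {ε₀ : ℝ} (hε₀ : 0 < ε₀) {F tfin : Finset X}
    {V : X → Set X} (yF vF : X → X)
    (hyF : ∀ p ∈ U, yF p ∈ F ∧ ∀ i < m, dist (T^[i] (yF p)) (T^[i] p) < ε₀ / 4)
    (hvF : ∀ p ∉ U, vF p ∈ tfin ∧ p ∈ V (vF p))
    (hV1 : ∀ v ∈ tfin, ∀ k, 1 ≤ k → ∀ y ∈ V v, T^[k] y ∉ V v)
    (hV2 : ∀ v ∈ tfin, ∀ a ∈ V v, ∀ b ∈ V v, dist a b ≤ ε₀ / 2)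
    (n : ℕ) (E : Finset X) (hE : IsSep T n ε₀ E) :
    E.card ≤ (tfin.card + 1) * (n * tfin.card + 1) ^ tfin.card
      * (F.card + 1) ^ (n / m + 2) := by
  classical
  set N := tfin.card with hN
  set b := n / m + 1 with hb
  set A : Finset (ℕ × X) := Finset.range n ×ˢ tfin with hA
  set 𝒜 : Finset (Finset (ℕ × X)) :=
    (Finset.range (N + 1)).biUnion (fun j => A.powersetCard j) with h𝒜
  set OF : Finset (Option X) := insert none (F.image some) with hOF
  set ℬ : Finset (Fin (b + 1) → Option X) := Fintype.piFinset (fun _ => OF) with hℬ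
  have hlen : ∀ x : X, (lstF T U m yF n x).length ≤ b := by
    intro x
    rw [lstF, List.length_map, Finset.length_sort]
    exact card_Phiset_le T U m hm n x
  have hmaps : ∀ x ∈ E, (SKcode T U m vF n x,
      fun j : Fin (b + 1) => (lstF T U m yF n x)[(j : ℕ)]?) ∈ 𝒜 ×ˢ ℬ := by
    intro x _
    rw [Finset.mem_product]
    dsimp only
    constructor
    · rw [h𝒜, Finset.mem_biUnion]
      refine ⟨(SKcode T U m vF n x).card, ?_, ?_⟩
      · rw [Finset.mem_range]
        have h1 : (SKcode T U m vF n x).card ≤ (Sset T U m n x).card :=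
          Finset.card_image_le
        have h2 := card_Sset_le T U m hm hvF hV1 n x
        omega
      · rw [Finset.mem_powersetCard]
        refine ⟨?_, rfl⟩
        intro p hp
        rw [SKcode] at hp
        obtain ⟨k, hk, rfl⟩ := Finset.mem_image.1 hp
        have hk' := (mem_Sset T U m hm).1 hk
        rw [hA, Finset.mem_product]
        constructor
        · rw [Finset.mem_range]
          exact lt_of_le_of_lt (le_bs T U m hm x k) hk'.1
        · exact (hvF _ hk'.2).1
    · rw [hℬ, Fintype.mem_piFinset]
      intro j
      show (lstF T U m yF n x)[(j : ℕ)]? ∈ OF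
      rw [hOF]
      cases hq : (lstF T U m yF n x)[(j : ℕ)]? with
      | none => exact Finset.mem_insert_self _ _
      | some y =>
        have hy : y ∈ lstF T U m yF n x := List.mem_of_getElem? hq
        rw [lstF] at hy
        obtain ⟨k, hk, rfl⟩ := List.mem_map.1 hy
        rw [Finset.mem_sort] at hk
        have hU := ((mem_Phiset T U m hm).1 hk).2
        exact Finset.mem_insert_of_mem
          (Finset.mem_image_of_mem _ (hyF _ hU).1)
  have hinj : Set.InjOn (fun x : X => (SKcode T U m vF n x,
      fun j : Fin (b + 1) => (lstF T U m yF n x)[(j : ℕ)]?)) E := by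
    intro x hx x' hx' hfeq
    have h1 : SKcode T U m vF n x = SKcode T U m vF n x' := congrArg Prod.fst hfeq
    have h2 : (fun j : Fin (b + 1) => (lstF T U m yF n x)[(j : ℕ)]?)
        = (fun j : Fin (b + 1) => (lstF T U m yF n x')[(j : ℕ)]?) := congrArg Prod.snd hfeq
    have hlst : lstF T U m yF n x = lstF T U m yF n x' := by
      refine List.ext_getElem? fun j => ?_
      by_cases hj : j < max (lstF T U m yF n x).length (lstF T U m yF n x').length
      swap
      · rw [List.getElem?_eq_none (by omega), List.getElem?_eq_none (by omega)]
      have hjb : j < b + 1 := by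
        have l1 := hlen x
        have l2 := hlen x'
        omega
      exact congrFun h2 ⟨j, hjb⟩
    have hclose := dist_le_of_code_eq T U m hm hyF hvF hV2 h1 hlst
    by_contra hne
    obtain ⟨i, hi, hd⟩ := hE x hx x' hx' hne
    have := hclose i hi
    linarith
  have hcard := Finset.card_le_card_of_injOn (fun x : X => (SKcode T U m vF n x,
      fun j : Fin (b + 1) => (lstF T U m yF n x)[(j : ℕ)]?)) hmaps hinj
  rw [Finset.card_product] at hcard
  have hAcard : A.card = n * N := by
    rw [hA, Finset.card_product, Finset.card_range]
  have h𝒜card : 𝒜.card ≤ (N + 1) * (n * N + 1) ^ N := by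
    refine le_trans Finset.card_biUnion_le ?_
    have hbound : ∀ j ∈ Finset.range (N + 1),
        (A.powersetCard j).card ≤ (n * N + 1) ^ N := by
      intro j hj
      rw [Finset.card_powersetCard, hAcard]
      calc (n * N).choose j ≤ (n * N) ^ j := Nat.choose_le_pow _ _
        _ ≤ (n * N + 1) ^ j := Nat.pow_le_pow_left (by omega) j
        _ ≤ (n * N + 1) ^ N := Nat.pow_le_pow_right (by omega)
            (by rw [Finset.mem_range] at hj; omega)
    calc ∑ j ∈ Finset.range (N + 1), (A.powersetCard j).card
        ≤ (Finset.range (N + 1)).card • ((n * N + 1) ^ N) :=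
          Finset.sum_le_card_nsmul _ _ _ hbound
      _ = (N + 1) * (n * N + 1) ^ N := by rw [Finset.card_range, smul_eq_mul]
  have hℬcard : ℬ.card = (F.card + 1) ^ (b + 1) := by
    rw [hℬ, Fintype.card_piFinset_const, hOF, Finset.card_insert_of_notMem (by simp),
      Finset.card_image_of_injective _ (Option.some_injective X)]
  calc E.card ≤ 𝒜.card * ℬ.card := hcard
    _ ≤ ((N + 1) * (n * N + 1) ^ N) * ((F.card + 1) ^ (b + 1)) := by
        rw [hℬcard]
        exact Nat.mul_le_mul_right _ h𝒜card
    _ = (tfin.card + 1) * (n * tfin.card + 1) ^ tfin.card * (F.card + 1) ^ (n / m + 2) := by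
        rw [hN, hb]


lemma exists_coding_bound [CompactSpace X] {T : X → X} (hT : Continuous T) {Z : Set X}
    (hZ : Z.Nonempty)
    (hΩ : {x : X | ∀ U : Set X, IsOpen U → x ∈ U → ∃ k : ℕ, 1 ≤ k ∧ ∃ y ∈ U, T^[k] y ∈ U}
      ⊆ closure Z)
    {ε₀ : ℝ} (hε₀ : 0 < ε₀) {m : ℕ} (hm : 1 ≤ m) :
    ∃ N : ℕ, ∀ n : ℕ, ∀ E : Finset X, IsSep T n ε₀ E →
      E.card ≤ (N + 1) * (n * N + 1) ^ N * (sepNum T Z m (ε₀ / 8) + 1) ^ (n / m + 2) := by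
  classical
  haveI : Nonempty X := ⟨hZ.some⟩
  obtain ⟨F, hFZ, hFsep, hFcard, hFone, hFspan⟩ :=
    exists_max_sep hT hZ (m := m) (ε := ε₀ / 8) (by linarith)
  set U : Set X := ⋃ y ∈ F, bowenBall T y m (ε₀ / 4) with hU
  have hUopen : IsOpen U := isOpen_biUnion fun y _ => isOpen_bowenBall hT
  have hclos : closure Z ⊆ U := by
    intro w hw
    obtain ⟨z, hz1, hz2⟩ := (mem_closure_iff.1 hw) (bowenBall T w m (ε₀ / 16))
      (isOpen_bowenBall hT) (fun i _ => by simp; linarith)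
    obtain ⟨y, hyF, hyd⟩ := hFspan z hz2
    rw [hU]
    refine Set.mem_biUnion hyF ?_
    intro i hi
    have d1 := hyd i hi
    have d2 := hz1 i hi
    have := dist_triangle (T^[i] y) (T^[i] z) (T^[i] w)
    rw [dist_comm (T^[i] w)] at d2
    linarith
  have hyF' : ∀ p, p ∈ U → ∃ y, y ∈ F ∧ ∀ i < m, dist (T^[i] y) (T^[i] p) < ε₀ / 4 := by
    intro p hp
    rw [hU] at hp
    obtain ⟨y, hy1, hy2⟩ := Set.mem_iUnion₂.1 hp
    exact ⟨y, hy1, hy2⟩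
  set yF : X → X := fun p => if h : p ∈ U then (hyF' p h).choose else hZ.some with hyFdef
  have hyF : ∀ p ∈ U, yF p ∈ F ∧ ∀ i < m, dist (T^[i] (yF p)) (T^[i] p) < ε₀ / 4 := by
    intro p hp
    rw [hyFdef]
    simp only [dif_pos hp]
    exact (hyF' p hp).choose_spec
  -- wandering neighborhoods
  have hwand : ∀ v : X, ∃ W : Set X, IsOpen W ∧ (v ∉ U → v ∈ W ∧ W ⊆ Metric.ball v (ε₀ / 4) ∧
      ∀ k, 1 ≤ k → ∀ y ∈ W, T^[k] y ∉ W) := by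
    intro v
    by_cases hv : v ∈ U
    · exact ⟨∅, isOpen_empty, fun h => absurd hv h⟩
    · have hvΩ : v ∉ {x : X | ∀ U' : Set X, IsOpen U' → x ∈ U' →
          ∃ k : ℕ, 1 ≤ k ∧ ∃ y ∈ U', T^[k] y ∈ U'} := fun hmem => hv (hclos (hΩ hmem))
      simp only [Set.mem_setOf_eq] at hvΩ
      push_neg at hvΩ
      obtain ⟨W₀, hop, hmemv, hk⟩ := hvΩ
      refine ⟨W₀ ∩ Metric.ball v (ε₀ / 4), hop.inter Metric.isOpen_ball, fun _ =>
        ⟨⟨hmemv, by simp; linarith⟩, Set.inter_subset_right, ?_⟩⟩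
      intro k hk1 y hy hTy
      have := hk k hk1 y hy.1
      exact this hTy.1
  choose W hWopen hWspec using hwand
  have hKcompact : IsCompact Uᶜ := hUopen.isClosed_compl.isCompact
  have hKcover : Uᶜ ⊆ ⋃ v ∈ Uᶜ, W v := by
    intro v hv
    exact Set.mem_biUnion hv (hWspec v hv).1
  obtain ⟨b', hb'sub, hb'fin, hb'cov⟩ := hKcompact.elim_finite_subcover_image
    (fun v _ => hWopen v) hKcover
  set tfin : Finset X := hb'fin.toFinset with htfin
  have htfinU : ∀ v ∈ tfin, v ∉ U := by
    intro v hv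
    rw [htfin, Set.Finite.mem_toFinset] at hv
    exact hb'sub hv
  have hvF' : ∀ p, p ∉ U → ∃ v, v ∈ tfin ∧ p ∈ W v := by
    intro p hp
    obtain ⟨v, hv1, hv2⟩ := Set.mem_iUnion₂.1 (hb'cov hp)
    exact ⟨v, by rw [htfin, Set.Finite.mem_toFinset]; exact hv1, hv2⟩
  set vF : X → X := fun p => if h : p ∉ U then (hvF' p h).choose else hZ.some with hvFdef
  have hvF : ∀ p, p ∉ U → vF p ∈ tfin ∧ p ∈ W (vF p) := by
    intro p hp
    rw [hvFdef]
    simp only [dif_pos hp]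
    exact (hvF' p hp).choose_spec
  have hV1 : ∀ v ∈ tfin, ∀ k, 1 ≤ k → ∀ y ∈ W v, T^[k] y ∉ W v := by
    intro v hv
    exact (hWspec v (htfinU v hv)).2.2
  have hV2 : ∀ v ∈ tfin, ∀ a ∈ W v, ∀ b ∈ W v, dist a b ≤ ε₀ / 2 := by
    intro v hv a ha b hb
    have hsub := (hWspec v (htfinU v hv)).2.1
    have h1 : dist a v < ε₀ / 4 := by have := hsub ha; simpa [Metric.mem_ball] using this
    have h2 : dist b v < ε₀ / 4 := by have := hsub hb; simpa [Metric.mem_ball] using this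
    have := dist_triangle a v b
    rw [dist_comm v b] at this
    linarith
  refine ⟨tfin.card, fun n E hE => ?_⟩
  have := coding_card_bound T U m hm hε₀ yF vF hyF hvF hV1 hV2 n E hE
  rw [hFcard] at this
  exact this

lemma sepNum_le {T : X → X} {W : Set X} {n : ℕ} {ε : ℝ} {M : ℕ}
    (h : ∀ E : Finset X, IsSep T n ε E → E.card ≤ M) : sepNum T W n ε ≤ M := by
  refine csSup_le ⟨0, ∅, by simp, fun x hx => by simp at hx, rfl⟩ ?_
  rintro k ⟨E, _, hsep, rfl⟩
  exact h E hsep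

lemma one_le_sepNum [CompactSpace X] {T : X → X} (hT : Continuous T) {W : Set X}
    (hW : W.Nonempty) {n : ℕ} {ε : ℝ} (hε : 0 < ε) : 1 ≤ sepNum T W n ε := by
  obtain ⟨F, _, _, hFcard, hFone, _⟩ := exists_max_sep hT hW (m := n) hε
  omega

lemma sepNum_mono [CompactSpace X] {T : X → X} (hT : Continuous T) {Z W : Set X}
    (hsub : Z ⊆ W) {n : ℕ} {ε : ℝ} (hε : 0 < ε) : sepNum T Z n ε ≤ sepNum T W n ε := by
  obtain ⟨M, hM⟩ := sep_card_bound hT hε (m := n)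
  refine csSup_le_csSup ⟨M, ?_⟩ ⟨0, ∅, by simp, fun x hx => by simp at hx, rfl⟩ ?_
  · rintro k ⟨E, _, hsep, rfl⟩
    exact hM E hsep
  · rintro k ⟨E, hE1, hE2, hE3⟩
    exact ⟨E, hE1.trans hsub, hE2, hE3⟩

/-- The key analytic estimate. -/
lemma limsup_le_aux [CompactSpace X] {T : X → X} (hT : Continuous T) {Z : Set X}
    (hZ : Z.Nonempty)
    (hΩ : {x : X | ∀ U : Set X, IsOpen U → x ∈ U → ∃ k : ℕ, 1 ≤ k ∧ ∃ y ∈ U, T^[k] y ∈ U}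
      ⊆ closure Z)
    {ε₀ : ℝ} (hε₀ : 0 < ε₀) {m : ℕ} (hm : 1 ≤ m) :
    Filter.limsup (fun n : ℕ => ((Real.log (sepNum T Set.univ n ε₀) / n : ℝ) : EReal))
        Filter.atTop
      ≤ ((Real.log (sepNum T Z m (ε₀ / 8) + 1) / m : ℝ) : EReal) := by
  classical
  obtain ⟨N, hN⟩ := exists_coding_bound hT hZ hΩ hε₀ hm
  set c : ℕ := sepNum T Z m (ε₀ / 8) with hc
  set L : ℝ := Real.log (c + 1) with hL
  have hLnn : 0 ≤ L := Real.log_nonneg (by push_cast; linarith [Nat.zero_le c])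
  set a : ℕ → ℝ := fun n =>
    Real.log (N + 1) / n + (N * Real.log (n * N + 1)) / n + (1 / m + 2 / n) * L with ha
  -- pointwise bound
  have hub : ∀ n : ℕ, 1 ≤ n →
      Real.log (sepNum T Set.univ n ε₀) / n ≤ a n := by
    intro n hn
    have hnR : (0 : ℝ) < n := by exact_mod_cast hn
    have hB : sepNum T Set.univ n ε₀ ≤ (N + 1) * (n * N + 1) ^ N * (c + 1) ^ (n / m + 2) :=
      sepNum_le (fun E hE => hN n E hE)
    have hBpos : (0 : ℝ) < ((N + 1) * (n * N + 1) ^ N * (c + 1) ^ (n / m + 2) : ℕ) := by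
      positivity
    have hlog : Real.log (sepNum T Set.univ n ε₀) ≤
        Real.log ((N + 1) * (n * N + 1) ^ N * (c + 1) ^ (n / m + 2) : ℕ) := by
      rcases Nat.eq_zero_or_pos (sepNum T Set.univ n ε₀) with h0 | hpos
      · rw [h0]
        simp only [Nat.cast_zero, Real.log_zero]
        exact Real.log_nonneg (by exact_mod_cast Nat.one_le_iff_ne_zero.2 (by positivity))
      · exact Real.log_le_log (by exact_mod_cast hpos) (by exact_mod_cast hB)
    have hexp : Real.log ((N + 1) * (n * N + 1) ^ N * (c + 1) ^ (n / m + 2) : ℕ) =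
        Real.log (N + 1) + N * Real.log (n * N + 1) + (n / m + 2 : ℕ) * Real.log (c + 1) := by
      push_cast
      rw [Real.log_mul (by positivity) (by positivity),
        Real.log_mul (by positivity) (by positivity), Real.log_pow, Real.log_pow]
      push_cast
      ring
    have hdiv : Real.log (sepNum T Set.univ n ε₀) / n ≤
        (Real.log (N + 1) + N * Real.log (n * N + 1) + (n / m + 2 : ℕ) * Real.log (c + 1)) / n := by
      rw [← hexp]
      exact div_le_div_of_nonneg_right hlog hnR.le
    refine hdiv.trans ?_
    rw [add_div, add_div]
    have hsplit : ((n / m + 2 : ℕ) : ℝ) * Real.log (c + 1) / n =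
        (((n / m : ℕ) : ℝ) + 2) / n * L := by
      rw [hL]
      push_cast
      ring
    rw [hsplit]
    have hfrac : (((n / m : ℕ) : ℝ) + 2) / n ≤ 1 / m + 2 / n := by
      have h1 : ((n / m : ℕ) : ℝ) ≤ (n : ℝ) / m := Nat.cast_div_le
      have h2 : (n : ℝ) / m / n = 1 / m := by
        field_simp
      rw [add_div]
      have h3 : ((n / m : ℕ) : ℝ) / n ≤ (n : ℝ) / m / n :=
        div_le_div_of_nonneg_right h1 hnR.le
      rw [h2] at h3
      linarith [h3]
    have := mul_le_mul_of_nonneg_right hfrac hLnn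
    rw [ha]
    simp only []
    linarith [this]
  -- limit of the majorant
  have hlim : Filter.Tendsto a Filter.atTop (𝓝 (L / m)) := by
    have T1 : Filter.Tendsto (fun n : ℕ => Real.log (N + 1) / n) Filter.atTop (𝓝 0) :=
      tendsto_const_div_atTop_nhds_zero_nat _
    have T2 : Filter.Tendsto (fun n : ℕ => (N * Real.log (n * N + 1)) / n)
        Filter.atTop (𝓝 0) := by
      rcases Nat.eq_zero_or_pos N with h0 | hNpos
      · subst h0
        simpa using tendsto_const_nhds (α := ℝ) (f := Filter.atTop (α := ℕ)) (a := 0)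
      · have hlo : (fun n : ℕ => Real.log (n * N + 1)) =o[Filter.atTop]
            (fun n : ℕ => (n : ℝ)) := by
          have hcomp : Filter.Tendsto (fun n : ℕ => ((n : ℝ) * N + 1)) Filter.atTop
              Filter.atTop := by
            apply Filter.tendsto_atTop_add_const_right
            apply Filter.Tendsto.atTop_mul_const (by exact_mod_cast hNpos)
            exact tendsto_natCast_atTop_atTop
          have h1 : (fun n : ℕ => Real.log ((n : ℝ) * N + 1)) =o[Filter.atTop]
              (fun n : ℕ => ((n : ℝ) * N + 1)) :=
            Real.isLittleO_log_id_atTop.comp_tendsto hcomp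
          have h2 : (fun n : ℕ => ((n : ℝ) * N + 1)) =O[Filter.atTop]
              (fun n : ℕ => (n : ℝ)) := by
            apply Asymptotics.IsBigO.of_bound (N + 1)
            filter_upwards [Filter.eventually_ge_atTop 1] with n hn
            have hnR : (1 : ℝ) ≤ n := by exact_mod_cast hn
            rw [Real.norm_eq_abs, Real.norm_eq_abs, abs_of_nonneg (by positivity),
              abs_of_nonneg (by positivity)]
            nlinarith [hnR]
          exact (h1.trans_isBigO h2).congr' (by
            filter_upwards with n
            push_cast
            ring_nf) (Filter.EventuallyEq.rfl)
        have := hlo.tendsto_div_nhds_zero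
        have h3 := this.const_mul (N : ℝ)
        simp only [mul_zero] at h3
        refine h3.congr ?_
        intro n
        ring
    have T3 : Filter.Tendsto (fun n : ℕ => (1 / m + 2 / n) * L) Filter.atTop
        (𝓝 ((1 / m + 0) * L)) := by
      apply Filter.Tendsto.mul_const
      exact tendsto_const_nhds.add (tendsto_const_div_atTop_nhds_zero_nat 2)
    have hsum := (T1.add T2).add T3
    have heq : (0 : ℝ) + 0 + (1 / m + 0) * L = L / m := by ring
    rw [heq] at hsum
    exact hsum
  have hcoe : Filter.Tendsto (fun n : ℕ => ((a n : ℝ) : EReal)) Filter.atTop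
      (𝓝 ((L / m : ℝ) : EReal)) := EReal.tendsto_coe.2 hlim
  have hlimsup : Filter.limsup (fun n : ℕ => ((a n : ℝ) : EReal)) Filter.atTop
      = ((L / m : ℝ) : EReal) := hcoe.limsup_eq
  refine le_trans (Filter.limsup_le_limsup ?_) (le_of_eq hlimsup)
  filter_upwards [Filter.eventually_ge_atTop 1] with n hn
  exact EReal.coe_le_coe_iff.2 (hub n hn)

/-- If `X` is a compact metric space, `T` continuous, and `Z` a nonempty
set whose closure contains the non-wandering set, then the upper capacity entropy of `T`
on `Z` equals the topological entropy of `(X,T)`. -/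
theorem uc_entropy_of_nonwandering_subset_closure [CompactSpace X]
    (T : X → X) (hT : Continuous T) (Z : Set X) (hZ : Z.Nonempty)
    (hΩ : {x : X | ∀ U : Set X, IsOpen U → x ∈ U → ∃ k : ℕ, 1 ≤ k ∧ ∃ y ∈ U, T^[k] y ∈ U}
      ⊆ closure Z) :
    ucEntropy T Z = ucEntropy T Set.univ := by

  classical
  haveI : Nonempty X := ⟨hZ.some⟩
  refine le_antisymm ?_ ?_
  · -- monotonicity
    rw [ucEntropy, ucEntropy]
    refine iSup₂_le fun ε hε => ?_
    refine le_trans ?_ (le_iSup₂ (f := fun (ε : ℝ) (_ : 0 < ε) =>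
      Filter.limsup (fun n : ℕ =>
        ((Real.log (sepNum T Set.univ n ε) / n : ℝ) : EReal)) Filter.atTop) ε hε)
    refine Filter.limsup_le_limsup ?_
    filter_upwards with n
    refine EReal.coe_le_coe_iff.2 ?_
    have h1 : sepNum T Z n ε ≤ sepNum T Set.univ n ε :=
      sepNum_mono hT (Set.subset_univ Z) hε
    have h2 : 1 ≤ sepNum T Z n ε := one_le_sepNum hT hZ hε
    have hlog : Real.log (sepNum T Z n ε) ≤ Real.log (sepNum T Set.univ n ε) :=
      Real.log_le_log (by exact_mod_cast h2) (by exact_mod_cast h1)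
    exact div_le_div_of_nonneg_right hlog (Nat.cast_nonneg n)
  · -- the hard direction
    rw [ucEntropy, ucEntropy]
    refine iSup₂_le fun ε₀ hε₀ => ?_
    have hRle : Filter.limsup (fun k : ℕ =>
        ((Real.log (sepNum T Z k (ε₀ / 8)) / k : ℝ) : EReal)) Filter.atTop
        ≤ ⨆ (ε : ℝ) (_ : 0 < ε), Filter.limsup (fun n : ℕ =>
          ((Real.log (sepNum T Z n ε) / n : ℝ) : EReal)) Filter.atTop :=
      le_iSup₂ (f := fun (ε : ℝ) (_ : 0 < ε) => Filter.limsup (fun n : ℕ =>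
        ((Real.log (sepNum T Z n ε) / n : ℝ) : EReal)) Filter.atTop) (ε₀ / 8) (by linarith)
    refine le_trans ?_ hRle
    by_contra hcon
    push_neg at hcon
    obtain ⟨q, hq1, hq2⟩ := EReal.exists_between_coe_real hcon
    have hLq : Filter.limsup (fun n : ℕ =>
        ((Real.log (sepNum T Set.univ n ε₀) / n : ℝ) : EReal)) Filter.atTop ≤ (q : EReal) := by
      by_contra hq3
      push_neg at hq3
      obtain ⟨r, hr1, hr2⟩ := EReal.exists_between_coe_real hq3
      have hqr : q < r := by exact_mod_cast hr1
      have hev1 : ∀ᶠ k : ℕ in Filter.atTop,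
          ((Real.log (sepNum T Z k (ε₀ / 8)) / k : ℝ) : EReal) < (q : EReal) :=
        Filter.eventually_lt_of_limsup_lt hq1
      obtain ⟨n₀, hn₀⟩ := exists_nat_one_div_lt (show (0 : ℝ) < r - q by linarith)
      obtain ⟨k, hk1, hk2⟩ :=
        (hev1.and (Filter.eventually_ge_atTop (n₀ + 1))).exists
      have hm1 : 1 ≤ k := by omega
      have hkey := limsup_le_aux hT hZ hΩ hε₀ hm1
      set ck : ℕ := sepNum T Z k (ε₀ / 8) with hck
      have hck1 : 1 ≤ ck := one_le_sepNum hT hZ (by linarith)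
      have hckR : (1 : ℝ) ≤ ck := by exact_mod_cast hck1
      have hkR : (0 : ℝ) < k := by exact_mod_cast hm1
      have hlog2 : Real.log (ck + 1) ≤ Real.log ck + 1 := by
        have e1 : Real.log ((ck : ℝ) + 1) ≤ Real.log (2 * ck) :=
          Real.log_le_log (by linarith) (by linarith)
        have e2 : Real.log (2 * (ck : ℝ)) = Real.log 2 + Real.log ck :=
          Real.log_mul two_ne_zero (by linarith)
        have e3 : Real.log 2 ≤ 1 := by
          have := Real.log_le_sub_one_of_pos (show (0:ℝ) < 2 by norm_num)
          linarith
        linarith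
      have hdivk : Real.log (ck + 1) / k ≤ Real.log ck / k + 1 / k := by
        rw [← add_div]
        exact div_le_div_of_nonneg_right hlog2 hkR.le
      have hqk : Real.log ck / k < q := EReal.coe_lt_coe_iff.1 hk1
      have h1k : 1 / (k : ℝ) < r - q := by
        have hle : ((n₀ : ℝ) + 1) ≤ k := by exact_mod_cast hk2
        have : 1 / (k : ℝ) ≤ 1 / ((n₀ : ℝ) + 1) :=
          one_div_le_one_div_of_le (by positivity) hle
        linarith
      have hfin : Real.log (ck + 1) / k ≤ r := by linarith
      have hLur : Filter.limsup (fun n : ℕ =>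
          ((Real.log (sepNum T Set.univ n ε₀) / n : ℝ) : EReal)) Filter.atTop ≤ (r : EReal) :=
        hkey.trans (EReal.coe_le_coe_iff.2 hfin)
      exact absurd hr2 (not_lt.2 hLur)
    exact absurd hq2 (not_lt.2 hLq)
end Coding
end

section
/- Let (X,T) be a topological dynamical system satisfying the almost product property. Then the measure center C_T(X) equals the closure of the set of almost periodic points: C_T(X) = closure(AP). -/
open Filter MeasureTheory Topology
open scoped ENNReal

variable {X : Type*} [MetricSpace X]

variable [MeasurableSpace X] [BorelSpace X]

/-- A probability measure is invariant under `T`. -/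
def InvariantProb (T : X → X) (μ : MeasureTheory.ProbabilityMeasure X) : Prop :=
  μ.toMeasure.map T = μ.toMeasure

/-- The `n`-th empirical measure of `x`: the average of Dirac masses along the orbit
segment `x, Tx, …, T^n x` (of length `n+1`, so that it is defined for every `n`). -/
noncomputable def empirical (T : X → X) (x : X) (n : ℕ) :
    MeasureTheory.ProbabilityMeasure X :=
  ⟨((n + 1 : ℝ≥0∞))⁻¹ • ∑ j ∈ Finset.range (n + 1), MeasureTheory.Measure.dirac (T^[j] x), by
    constructor
    simp [MeasureTheory.Measure.smul_apply, smul_eq_mul]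
    rw [ENNReal.inv_mul_cancel] <;> simp⟩

/-- The set `M_x` of weak* limit points of the empirical measures of `x`. -/
def limitMeasures (T : X → X) (x : X) : Set (MeasureTheory.ProbabilityMeasure X) :=
  {μ | MapClusterPt μ Filter.atTop (fun n => empirical T x n)}

/-- The saturated set `G_K = {x : M_x = K}`. -/
def saturated (T : X → X) (K : Set (MeasureTheory.ProbabilityMeasure X)) : Set X :=
  {x | limitMeasures T x = K}

/-- The support of a probability measure. -/
def measSupp (μ : MeasureTheory.ProbabilityMeasure X) : Set X :=
  {x | ∀ U : Set X, IsOpen U → x ∈ U → 0 < μ.toMeasure U}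

/-- The measure center: the closure of the union of supports of invariant measures. -/
noncomputable def measureCenter (T : X → X) : Set X :=
  closure (⋃ (μ : MeasureTheory.ProbabilityMeasure X) (_ : InvariantProb T μ), measSupp μ)

/-- `β(f)`: the supremum of `∫ f dμ` over invariant probability measures. -/
noncomputable def birkhoffSup (T : X → X) (f : X → ℝ) : ℝ :=
  sSup {r : ℝ | ∃ ν : MeasureTheory.ProbabilityMeasure X,
    InvariantProb T ν ∧ r = ∫ x, f x ∂ν.toMeasure}

/-- The set of initial values of measure-recurrent `f`-optimal orbits: points whose
empirical measures converge to an invariant measure in whose support they lie, and whose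
Birkhoff averages of `f` converge to `β(f)`. -/
def mrOptimal (T : X → X) (f : X → ℝ) : Set X :=
  {x | (∃ μ : MeasureTheory.ProbabilityMeasure X,
          Filter.Tendsto (fun n => empirical T x n) Filter.atTop (nhds μ) ∧ x ∈ measSupp μ) ∧
    Filter.Tendsto (fun n => (∑ i ∈ Finset.range n, f (T^[i] x)) / n)
      Filter.atTop (nhds (birkhoffSup T f))}
/-- The mistake Bowen ball (the `g`-blowup of `B_n(x,ε)`). -/
def mistakeBall (T : X → X) (g : ℕ → ℕ) (x : X) (n : ℕ) (ε : ℝ) : Set X :=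
  {y | ∃ Λ : Finset ℕ, Λ ⊆ Finset.range n ∧ (Finset.range n \ Λ).card ≤ g n ∧
    ∀ j ∈ Λ, dist (T^[j] x) (T^[j] y) ≤ ε}

/-- The almost product property of Pfister–Sullivan, with a blowup function `g` and a
gap function `m`. -/
def AlmostProductProperty (T : X → X) : Prop :=
  ∃ g : ℕ → ℕ, ∃ m : ℝ → ℕ,
    Monotone g ∧ (∀ N : ℕ, ∃ n : ℕ, N ≤ g n) ∧ (∀ n : ℕ, 1 ≤ n → g n < n) ∧
    Filter.Tendsto (fun n : ℕ => (g n : ℝ) / n) Filter.atTop (nhds 0) ∧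
    (∀ ε δ : ℝ, 0 < ε → ε ≤ δ → m δ ≤ m ε) ∧
    ∀ (k : ℕ) (x : ℕ → X) (ε : ℕ → ℝ) (n : ℕ → ℕ), 2 ≤ k →
      (∀ j < k, 0 < ε j) → (∀ j < k, m (ε j) ≤ n j) →
      (⋂ j ∈ Finset.range k,
        (T^[∑ i ∈ Finset.range j, n i]) ⁻¹' mistakeBall T g (x j) (n j) (ε j)).Nonempty
/-- The set of almost periodic points. -/
def almostPeriodicPts (T : X → X) : Set X :=
  {x | ∀ U : Set X, IsOpen U → x ∈ U →
    ∃ N : ℕ, ∀ n : ℕ, ∃ k : ℕ, n ≤ k ∧ k ≤ n + N ∧ T^[k] x ∈ U}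


section AuxiliaryDevelopment
open Set

open Filter MeasureTheory Topology Set
open scoped ENNReal

section VisitCount

attribute [local instance] Classical.propDecidable

variable {Y : Type*}

/-- Number of times `j < n` with `T^[j] x ∈ S`. -/
noncomputable def visitCount (T : Y → Y) (x : Y) (S : Set Y) (n : ℕ) : ℕ :=
  ((Finset.range n).filter fun j => T^[j] x ∈ S).card

variable {T : Y → Y} {x : Y} {S S' : Set Y} {n : ℕ}

lemma visitCount_mono (h : S ⊆ S') : visitCount T x S n ≤ visitCount T x S' n := by
  refine Finset.card_le_card (Finset.monotone_filter_right _ ?_)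
  intro j _ hj
  exact h hj

lemma visitCount_le : visitCount T x S n ≤ n := by
  simpa [visitCount] using Finset.card_filter_le (Finset.range n) _

lemma visitCount_union (h : Disjoint S S') :
    visitCount T x (S ∪ S') n = visitCount T x S n + visitCount T x S' n := by
  classical
  unfold visitCount
  simp only [Set.mem_union]
  rw [Finset.filter_or, Finset.card_union_of_disjoint]
  rw [Finset.disjoint_filter]
  intro j _ hj hj'
  exact h.le_bot ⟨hj, hj'⟩

lemma visitCount_union_le :
    visitCount T x (S ∪ S') n ≤ visitCount T x S n + visitCount T x S' n := by
  classical
  unfold visitCount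
  simp only [Set.mem_union]
  rw [Finset.filter_or]
  exact Finset.card_union_le _ _

lemma visitCount_univ : visitCount T x Set.univ n = n := by
  simp [visitCount]

lemma visitCount_preimage_le :
    visitCount T x (T ⁻¹' S) n ≤ visitCount T x S n + 1 := by
  classical
  unfold visitCount
  have h1 : ((Finset.range n).filter fun j => T^[j] x ∈ T ⁻¹' S).card
      ≤ ((Finset.range (n+1)).filter fun j => T^[j] x ∈ S).card := by
    refine Finset.card_le_card_of_injOn (fun j => j + 1) ?_ ?_
    · intro j hj
      simp only [Finset.mem_coe, Finset.mem_filter, Finset.mem_range] at hj ⊢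
      refine ⟨by omega, ?_⟩
      have := hj.2
      simpa [Function.iterate_succ_apply'] using this
    · intro a _ b _ hab
      simpa using hab
  refine h1.trans ?_
  rw [Finset.range_add_one, Finset.filter_insert]
  split
  · exact (Finset.card_insert_le _ _).trans (by omega)
  · omega

lemma visitCount_le_preimage :
    visitCount T x S n ≤ visitCount T x (T ⁻¹' S) n + 1 := by
  classical
  unfold visitCount
  have hsub : ((Finset.range n).filter fun j => T^[j] x ∈ S)
      ⊆ insert 0 (((Finset.range n).filter fun j => T^[j] x ∈ T ⁻¹' S).image (· + 1)) := by
    intro j hj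
    simp only [Finset.mem_filter, Finset.mem_range] at hj
    rcases Nat.eq_zero_or_pos j with rfl | hpos
    · exact Finset.mem_insert_self _ _
    · refine Finset.mem_insert_of_mem ?_
      refine Finset.mem_image.mpr ⟨j - 1, ?_, by omega⟩
      simp only [Finset.mem_filter, Finset.mem_range]
      refine ⟨by omega, ?_⟩
      show T^[j-1] x ∈ T ⁻¹' S
      have he : T^[(j-1)+1] x = T (T^[j-1] x) := Function.iterate_succ_apply' T (j-1) x
      have hj1 : (j-1)+1 = j := by omega
      rw [hj1] at he
      simp only [Set.mem_preimage, ← he]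
      exact hj.2
  calc ((Finset.range n).filter fun j => T^[j] x ∈ S).card
      ≤ _ := Finset.card_le_card hsub
    _ ≤ _ := (Finset.card_insert_le _ _).trans (by
        have := Finset.card_image_le (s := (Finset.range n).filter fun j => T^[j] x ∈ T ⁻¹' S)
          (f := (· + 1))
        omega)

/-- Syndetic visits give a density lower bound. -/
lemma le_visitCount_of_syndetic {N : ℕ}
    (h : ∀ n : ℕ, ∃ k : ℕ, n ≤ k ∧ k ≤ n + N ∧ T^[k] x ∈ S) (n : ℕ) :
    n / (N + 1) ≤ visitCount T x S n := by
  classical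
  choose k hk1 hk2 hk3 using fun i : ℕ => h (i * (N+1))
  have key := Finset.card_le_card_of_injOn (s := Finset.range (n / (N+1)))
    (t := (Finset.range n).filter fun j => T^[j] x ∈ S) k ?_ ?_
  · simpa [visitCount] using key
  · intro i hi
    simp only [Finset.mem_coe, Finset.mem_range] at hi
    simp only [Finset.mem_coe, Finset.mem_filter, Finset.mem_range]
    refine ⟨?_, hk3 i⟩
    have h1 : (i+1) * (N+1) ≤ (n / (N+1)) * (N+1) := Nat.mul_le_mul_right _ (by omega)
    have h2 : (n / (N+1)) * (N+1) ≤ n := Nat.div_mul_le_self n (N+1)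
    have h3 := hk2 i
    nlinarith
  · intro a _ b _ hab
    have key : ∀ c, k c / (N+1) = c := by
      intro c
      refine Nat.div_eq_of_lt_le (by simpa [Nat.mul_comm] using hk1 c) ?_
      have := hk2 c
      calc k c ≤ c * (N+1) + N := this
        _ < (c+1) * (N+1) := by ring_nf; omega
    rw [← key a, ← key b, hab]

end VisitCount
section Freq

variable {Y : Type*}

/-- The visit frequency sequence. -/
noncomputable def avgSeq (T : Y → Y) (x : Y) (S : Set Y) (n : ℕ) : ℝ :=
  (visitCount T x S n : ℝ) / n

lemma avgSeq_mem_Icc (T : Y → Y) (x : Y) (S : Set Y) (n : ℕ) :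
    avgSeq T x S n ∈ Set.Icc (0:ℝ) 1 := by
  unfold avgSeq
  rcases Nat.eq_zero_or_pos n with rfl | hn
  · simp
  constructor
  · exact div_nonneg (by positivity) (by positivity)
  · rw [div_le_one (by exact_mod_cast hn : (0:ℝ) < n)]
    exact_mod_cast visitCount_le

/-- A fixed ultrafilter extending `atTop`. -/
noncomputable def UF : Ultrafilter ℕ := Ultrafilter.of atTop

lemma UF_le_atTop : (UF : Filter ℕ) ≤ atTop := Ultrafilter.of_le _

lemma exists_freq (T : Y → Y) (x : Y) (S : Set Y) :
    ∃ r : ℝ, r ∈ Set.Icc (0:ℝ) 1 ∧ Tendsto (avgSeq T x S) UF (𝓝 r) := by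
  have hle : (UF.map (avgSeq T x S) : Filter ℝ) ≤ Filter.principal (Set.Icc 0 1) := by
    rw [le_principal_iff]
    exact Filter.mem_map.mpr (Filter.Eventually.of_forall fun n => avgSeq_mem_Icc T x S n)
  obtain ⟨r, hr, hle'⟩ := isCompact_Icc.ultrafilter_le_nhds (UF.map (avgSeq T x S)) hle
  exact ⟨r, hr, hle'⟩

/-- The visit frequency of `S` along the fixed ultrafilter. -/
noncomputable def freq (T : Y → Y) (x : Y) (S : Set Y) : ℝ :=
  (exists_freq T x S).choose

lemma freq_mem_Icc (T : Y → Y) (x : Y) (S : Set Y) : freq T x S ∈ Set.Icc (0:ℝ) 1 :=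
  (exists_freq T x S).choose_spec.1

lemma freq_tendsto (T : Y → Y) (x : Y) (S : Set Y) :
    Tendsto (avgSeq T x S) UF (𝓝 (freq T x S)) :=
  (exists_freq T x S).choose_spec.2

lemma freq_nonneg (T : Y → Y) (x : Y) (S : Set Y) : 0 ≤ freq T x S := (freq_mem_Icc T x S).1

variable {T : Y → Y} {x : Y} {S S' : Set Y}

lemma freq_mono (h : S ⊆ S') : freq T x S ≤ freq T x S' :=
  le_of_tendsto_of_tendsto' (freq_tendsto T x S) (freq_tendsto T x S') fun n => by
    unfold avgSeq
    gcongr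
    exact_mod_cast visitCount_mono h

lemma freq_union (h : Disjoint S S') :
    freq T x (S ∪ S') = freq T x S + freq T x S' := by
  have h1 : Tendsto (avgSeq T x (S ∪ S')) UF (𝓝 (freq T x S + freq T x S')) := by
    have := (freq_tendsto T x S).add (freq_tendsto T x S')
    refine this.congr fun n => ?_
    simp only [avgSeq, ← add_div, visitCount_union h]
    push_cast
    ring
  exact tendsto_nhds_unique (freq_tendsto T x (S ∪ S')) h1

lemma freq_union_le :
    freq T x (S ∪ S') ≤ freq T x S + freq T x S' := by
  have h1 : Tendsto (fun n => avgSeq T x S n + avgSeq T x S' n) UF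
      (𝓝 (freq T x S + freq T x S')) := (freq_tendsto T x S).add (freq_tendsto T x S')
  refine le_of_tendsto_of_tendsto' (freq_tendsto T x (S ∪ S')) h1 fun n => ?_
  simp only [avgSeq, ← add_div]
  gcongr
  exact_mod_cast visitCount_union_le

lemma freq_univ : freq T x Set.univ = 1 := by
  have h1 : Tendsto (avgSeq T x Set.univ) UF (𝓝 1) := by
    have hev : ∀ᶠ n in (UF : Filter ℕ), avgSeq T x Set.univ n = 1 := by
      refine Filter.Eventually.filter_mono UF_le_atTop ?_
      filter_upwards [eventually_gt_atTop 0] with n hn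
      have hne : (n:ℝ) ≠ 0 := by exact_mod_cast hn.ne'
      simp [avgSeq, visitCount_univ, div_self hne]
    exact Tendsto.congr' (hev.mono fun n h => h.symm) tendsto_const_nhds
  exact tendsto_nhds_unique (freq_tendsto T x Set.univ) h1

lemma freq_preimage : freq T x (T ⁻¹' S) = freq T x S := by
  have hdiff : Tendsto (fun n => avgSeq T x (T ⁻¹' S) n - avgSeq T x S n) UF (𝓝 0) := by
    apply squeeze_zero_norm' (a := fun n : ℕ => 1 / (n:ℝ))
    · refine Filter.Eventually.filter_mono UF_le_atTop ?_
      filter_upwards [eventually_gt_atTop 0] with n hn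
      have hn' : (0:ℝ) < n := by exact_mod_cast hn
      have h1 := visitCount_preimage_le (T := T) (x := x) (S := S) (n := n)
      have h2 := visitCount_le_preimage (T := T) (x := x) (S := S) (n := n)
      have h1' : (visitCount T x (T ⁻¹' S) n : ℝ) ≤ visitCount T x S n + 1 := by exact_mod_cast h1
      have h2' : (visitCount T x S n : ℝ) ≤ visitCount T x (T ⁻¹' S) n + 1 := by exact_mod_cast h2
      rw [Real.norm_eq_abs]
      simp only [avgSeq, div_sub_div_same]
      rw [abs_div, abs_of_pos hn', div_le_div_iff₀ hn' hn']
      have : |(visitCount T x (T ⁻¹' S) n : ℝ) - visitCount T x S n| ≤ 1 := by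
        rw [abs_le]; constructor <;> linarith
      nlinarith [abs_nonneg ((visitCount T x (T ⁻¹' S) n : ℝ) - visitCount T x S n)]
    · exact Tendsto.mono_left (tendsto_one_div_atTop_nhds_zero_nat) UF_le_atTop
  have h1 : Tendsto (avgSeq T x (T ⁻¹' S)) UF (𝓝 (freq T x S + 0)) := by
    have := (freq_tendsto T x S).add hdiff
    refine this.congr fun n => by ring
  rw [add_zero] at h1
  exact tendsto_nhds_unique (freq_tendsto T x (T ⁻¹' S)) h1

lemma le_freq_of_eventually {c : ℝ} (h : ∀ᶠ n in atTop, c ≤ avgSeq T x S n) :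
    c ≤ freq T x S :=
  ge_of_tendsto (freq_tendsto T x S) (Filter.Eventually.filter_mono UF_le_atTop h)

end Freq

section APContent

variable {Y : Type*} [MetricSpace Y] [MeasurableSpace Y] [BorelSpace Y] [CompactSpace Y]
variable (T : Y → Y) (x : Y)

/-- The content given by visit frequencies of the orbit of `x`. -/
noncomputable def apContent : MeasureTheory.Content Y where
  toFun K := ⟨freq T x K, freq_nonneg T x K⟩
  mono' K₁ K₂ h := by
    exact freq_mono (T := T) (x := x) h
  sup_disjoint' K₁ K₂ h _ _ := by
    apply NNReal.coe_injective
    push_cast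
    exact freq_union (T := T) (x := x) h
  sup_le' K₁ K₂ := by
    change freq T x ((K₁ : Set Y) ∪ K₂) ≤ freq T x K₁ + freq T x K₂
    push_cast
    simpa [TopologicalSpace.Compacts.coe_sup] using
      freq_union_le (T := T) (x := x) (S := K₁) (S' := K₂)

lemma apContent_measure_univ : (apContent T x).measure Set.univ = 1 := by
  rw [MeasureTheory.Content.measure_apply _ MeasurableSet.univ,
    (apContent T x).outerMeasure_of_isOpen Set.univ isOpen_univ,
    (apContent T x).innerContent_of_isCompact isCompact_univ isOpen_univ]
  have : (apContent T x).toFun ⟨Set.univ, isCompact_univ⟩ = 1 := by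
    apply NNReal.coe_injective
    push_cast
    exact freq_univ
  show ((apContent T x).toFun ⟨Set.univ, isCompact_univ⟩ : ℝ≥0∞) = 1
  rw [this]
  simp

lemma apContent_innerContent_preimage (hT : Continuous T) (U : Set Y) (hU : IsOpen U) :
    (apContent T x).innerContent ⟨T ⁻¹' U, hU.preimage hT⟩
      = (apContent T x).innerContent ⟨U, hU⟩ := by
  apply le_antisymm
  · refine iSup₂_le fun K hK => ?_
    refine le_trans ?_ ((apContent T x).le_innerContent ⟨T '' K, K.2.image hT⟩
      ⟨U, hU⟩ (Set.image_subset_iff.mpr hK))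
    show ((apContent T x).toFun K : ℝ≥0∞) ≤ ((apContent T x).toFun ⟨T '' K, K.2.image hT⟩ : ℝ≥0∞)
    rw [ENNReal.coe_le_coe, ← NNReal.coe_le_coe]
    show freq T x ↑K ≤ freq T x (T '' ↑K)
    calc freq T x ↑K ≤ freq T x (T ⁻¹' (T '' ↑K)) := freq_mono (Set.subset_preimage_image _ _)
      _ = freq T x (T '' ↑K) := freq_preimage
  · refine iSup₂_le fun K hK => ?_
    refine le_trans ?_ ((apContent T x).le_innerContent
      ⟨T ⁻¹' ↑K, (K.2.isClosed.preimage hT).isCompact⟩ ⟨T ⁻¹' U, hU.preimage hT⟩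
      (by simpa using Set.preimage_mono (f := T) hK))
    show ((apContent T x).toFun K : ℝ≥0∞)
      ≤ ((apContent T x).toFun ⟨T ⁻¹' ↑K, (K.2.isClosed.preimage hT).isCompact⟩ : ℝ≥0∞)
    rw [ENNReal.coe_le_coe, ← NNReal.coe_le_coe]
    show freq T x ↑K ≤ freq T x (T ⁻¹' ↑K)
    exact le_of_eq freq_preimage.symm

lemma apContent_measure_map (hT : Continuous T) :
    ((apContent T x).measure).map T = (apContent T x).measure := by
  haveI : MeasureTheory.IsProbabilityMeasure ((apContent T x).measure) :=
    ⟨apContent_measure_univ T x⟩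
  haveI : MeasureTheory.IsProbabilityMeasure (((apContent T x).measure).map T) :=
    MeasureTheory.Measure.isProbabilityMeasure_map hT.measurable.aemeasurable
  refine MeasureTheory.ext_of_generate_finite {s : Set Y | IsOpen s} ?_ ?_ ?_ ?_
  · rw [BorelSpace.measurable_eq (α := Y)]
    rfl
  · exact fun s hs t ht _ => hs.inter ht
  · intro s hs
    rw [MeasureTheory.Measure.map_apply hT.measurable hs.measurableSet,
      MeasureTheory.Content.measure_apply _ (hs.measurableSet.preimage hT.measurable),
      MeasureTheory.Content.measure_apply _ hs.measurableSet,
      (apContent T x).outerMeasure_of_isOpen _ (hs.preimage hT),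
      (apContent T x).outerMeasure_of_isOpen _ hs]
    exact apContent_innerContent_preimage T x hT s hs
  · rw [MeasureTheory.Measure.map_apply hT.measurable MeasurableSet.univ]
    simp

omit [MetricSpace Y] [MeasurableSpace Y] [BorelSpace Y] [CompactSpace Y] in
/-- Syndetic visits give positive frequency. -/
lemma freq_pos_of_syndetic {S : Set Y} {N : ℕ}
    (h : ∀ n : ℕ, ∃ k : ℕ, n ≤ k ∧ k ≤ n + N ∧ T^[k] x ∈ S) :
    0 < freq T x S := by
  have hc : (0:ℝ) < 1 / (2 * (N + 1)) := by positivity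
  refine lt_of_lt_of_le hc (le_freq_of_eventually ?_)
  filter_upwards [Filter.eventually_ge_atTop (2 * (N + 1))] with n hn
  have hq : n / (N+1) ≤ visitCount T x S n := le_visitCount_of_syndetic h n
  set q := n / (N+1) with hqdef
  have hq2 : 2 ≤ q := (Nat.le_div_iff_mul_le (by omega)).mpr (by omega)
  have hlt : n < (q + 1) * (N + 1) := by
    have h1 : (N+1) * q + n % (N+1) = n := Nat.div_add_mod n (N+1)
    have h2 : n % (N+1) < N + 1 := Nat.mod_lt _ (by omega)
    nlinarith
  have hnat : n ≤ 2 * visitCount T x S n * (N + 1) := by nlinarith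
  have hnpos : (0:ℝ) < n := by
    have : 0 < n := by omega
    exact_mod_cast this
  unfold avgSeq
  rw [div_le_div_iff₀ (by positivity) hnpos]
  have : (n:ℝ) ≤ 2 * visitCount T x S n * (N + 1) := by exact_mod_cast hnat
  nlinarith

end APContent

section MinimalSets

variable {Y : Type*} [MetricSpace Y]

/-- Every nonempty closed invariant set contains a minimal set, all of whose points
are almost periodic. -/
lemma exists_ap_subset [CompactSpace Y] {T : Y → Y} (hT : Continuous T) {A : Set Y}
    (hne : A.Nonempty) (hcl : IsClosed A) (hinv : Set.MapsTo T A A) :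
    ∃ M : Set Y, M.Nonempty ∧ M ⊆ A ∧ Set.MapsTo T M M ∧ M ⊆ almostPeriodicPts T := by
  set S : Set (Set Y) := {B | B.Nonempty ∧ IsClosed B ∧ Set.MapsTo T B B} with hS
  have hzorn := zorn_superset_nonempty S ?_ A ⟨hne, hcl, hinv⟩
  · obtain ⟨M, hMA, hmin⟩ := hzorn
    obtain ⟨hMne, hMcl, hMinv⟩ := hmin.prop
    refine ⟨M, hMne, hMA, hMinv, ?_⟩
    intro p hp U hU hpU
    have hMsub : M ⊆ ⋃ k : ℕ, T^[k] ⁻¹' U := by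
      by_contra hcon
      rw [Set.not_subset] at hcon
      obtain ⟨q, hqM, hq⟩ := hcon
      set M' : Set Y := M ∩ ⋂ k : ℕ, T^[k] ⁻¹' Uᶜ with hM'
      have hM'S : M' ∈ S := by
        refine ⟨⟨q, hqM, ?_⟩, ?_, ?_⟩
        · simp only [Set.mem_iInter, Set.mem_preimage, Set.mem_compl_iff]
          intro k hk
          exact hq (Set.mem_iUnion.mpr ⟨k, hk⟩)
        · exact hMcl.inter (isClosed_iInter fun k =>
            (hU.isClosed_compl).preimage (hT.iterate k))
        · intro v hv
          refine ⟨hMinv hv.1, ?_⟩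
          simp only [Set.mem_iInter, Set.mem_preimage, Set.mem_compl_iff]
          intro k hk
          have := Set.mem_iInter.mp hv.2 (k+1)
          simp only [Set.mem_preimage, Set.mem_compl_iff] at this
          exact this (by rwa [Function.iterate_succ_apply])
      have hMM' : M ⊆ M' := hmin.2 hM'S Set.inter_subset_left
      have : p ∈ M' := hMM' hp
      have := Set.mem_iInter.mp this.2 0
      simp only [Set.mem_preimage, Set.mem_compl_iff, Function.iterate_zero_apply] at this
      exact this hpU
    obtain ⟨t, ht⟩ := (hMcl.isCompact).elim_finite_subcover (fun k : ℕ => T^[k] ⁻¹' U)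
      (fun k => hU.preimage (hT.iterate k)) hMsub
    refine ⟨t.sup id, fun n => ?_⟩
    have hTn : T^[n] p ∈ M := hMinv.iterate n hp
    obtain ⟨k, hkt, hk⟩ := Set.mem_iUnion₂.mp (ht hTn)
    have hkN : k ≤ t.sup id := Finset.le_sup (f := id) hkt
    refine ⟨k + n, by omega, by omega, ?_⟩
    rw [Function.iterate_add_apply]
    exact hk
  · intro c hcS hchain hcne
    refine ⟨⋂₀ c, ⟨?_, ?_, ?_⟩, fun s hs => Set.sInter_subset_of_mem hs⟩
    · haveI := hcne.coe_sort
      rw [Set.sInter_eq_iInter]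
      apply IsCompact.nonempty_iInter_of_directed_nonempty_isCompact_isClosed
        ((↑) : c → Set Y)
      · intro i j
        rcases hchain.total i.2 j.2 with h | h
        · exact ⟨i, Set.Subset.rfl, h⟩
        · exact ⟨j, h, Set.Subset.rfl⟩
      · exact fun i => (hcS i.prop).1
      · exact fun i => (hcS i.prop).2.1.isCompact
      · exact fun i => (hcS i.prop).2.1
    · exact isClosed_sInter fun s hs => (hcS hs).2.1
    · intro v hv
      rw [Set.mem_sInter]
      intro s hs
      exact (hcS hs).2.2 (Set.mem_sInter.mp hv s hs)

end MinimalSets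

section Averaging

attribute [local instance] Classical.propDecidable

variable {Y : Type*} [MetricSpace Y] [MeasurableSpace Y] [BorelSpace Y]

/-- If `b < L·μ(B)` for an invariant measure, some point visits `B` more than `b` times
before time `L`. -/
lemma exists_many_visits {T : Y → Y} (hT : Continuous T)
    {μ : MeasureTheory.Measure Y} [MeasureTheory.IsProbabilityMeasure μ] (hμ : μ.map T = μ)
    {B : Set Y} (hB : MeasurableSet B) {L b : ℕ}
    (hb : (b : ℝ≥0∞) < L * μ B) :
    ∃ w : Y, b < visitCount T w B L := by
  by_contra hcon
  push_neg at hcon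
  have hpre : ∀ j : ℕ, μ (T^[j] ⁻¹' B) = μ B := by
    intro j
    induction j with
    | zero => simp
    | succ j ih =>
      rw [Function.iterate_succ, Set.preimage_comp]
      have h1 : μ (T ⁻¹' (T^[j] ⁻¹' B)) = (μ.map T) (T^[j] ⁻¹' B) :=
        (MeasureTheory.Measure.map_apply hT.measurable
          (hB.preimage (hT.measurable.iterate j))).symm
      rw [h1, hμ, ih]
  set f : Y → ℝ≥0∞ :=
    fun w => ∑ j ∈ Finset.range L, (T^[j] ⁻¹' B).indicator (fun _ => (1:ℝ≥0∞)) w with hf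
  have hint : ∫⁻ w, f w ∂μ = L * μ B := by
    rw [MeasureTheory.lintegral_finset_sum]
    · have heach : ∀ j, ∫⁻ w, (T^[j] ⁻¹' B).indicator (fun _ => (1:ℝ≥0∞)) w ∂μ = μ B := by
        intro j
        rw [MeasureTheory.lintegral_indicator (hB.preimage (hT.measurable.iterate j))]
        simp [hpre j]
      simp [heach, Finset.sum_const, Finset.card_range]
    · exact fun j _ => measurable_const.indicator (hB.preimage (hT.measurable.iterate j))
  have hptw : ∀ w, f w ≤ (b : ℝ≥0∞) := by
    intro w
    have hfw : f w = (visitCount T w B L : ℝ≥0∞) := by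
      simp only [hf, Set.indicator_apply, Set.mem_preimage, visitCount]
      rw [Finset.sum_boole]
    rw [hfw]
    exact_mod_cast hcon w
  have hle : ∫⁻ w, f w ∂μ ≤ (b : ℝ≥0∞) := by
    calc ∫⁻ w, f w ∂μ ≤ ∫⁻ _, (b:ℝ≥0∞) ∂μ := MeasureTheory.lintegral_mono hptw
      _ = b := by simp
  rw [hint] at hle
  exact absurd (lt_of_lt_of_le hb hle) (lt_irrefl _)

end Averaging

section PartB

variable {Y : Type*} [MetricSpace Y] [MeasurableSpace Y] [BorelSpace Y]

lemma measSupp_subset_closure_ap [CompactSpace Y] {T : Y → Y} (hT : Continuous T)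
    (hAPP : AlmostProductProperty T) {μ : MeasureTheory.ProbabilityMeasure Y}
    (hμ : InvariantProb T μ) : measSupp μ ⊆ closure (almostPeriodicPts T) := by
  classical
  obtain ⟨g, m, hgmono, hgunb, hglt, hgdiv, hmmono, hglue⟩ := hAPP
  intro x hx
  rw [Metric.mem_closure_iff]
  intro ε hε
  suffices h : ∃ p ∈ almostPeriodicPts T, dist x p ≤ ε / 2 by
    obtain ⟨p, hp, hd⟩ := h
    exact ⟨p, hp, lt_of_le_of_lt hd (by linarith)⟩
  set δ := ε / 4 with hδdef
  have hδpos : 0 < δ := by positivity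
  set B := Metric.ball x δ with hBdef
  have hBpos : 0 < μ.toMeasure B := hx B Metric.isOpen_ball (Metric.mem_ball_self hδpos)
  have hμBne : μ.toMeasure B ≠ ⊤ :=
    (lt_of_le_of_lt MeasureTheory.prob_le_one ENNReal.one_lt_top).ne
  have hc : (0:ℝ) < (μ.toMeasure B).toReal :=
    ENNReal.toReal_pos hBpos.ne' hμBne
  -- choose a block length L
  obtain ⟨L, hL⟩ := ((hgdiv.eventually_lt_const (half_pos hc)).and
      (Filter.eventually_ge_atTop (max (m δ) 1))).exists
  have hL1 : 1 ≤ L := le_trans (le_max_right _ _) hL.2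
  have hLm : m δ ≤ L := le_trans (le_max_left _ _) hL.2
  have hLpos : (0:ℝ) < L := by exact_mod_cast hL1
  -- the measure bound
  have hgL : (g L : ℝ) < L * (μ.toMeasure B).toReal := by
    have h1 := hL.1
    rw [div_lt_iff₀ hLpos] at h1
    nlinarith
  have hbound : ((g L : ℕ) : ℝ≥0∞) < (L : ℕ) * μ.toMeasure B := by
    have he1 : ((g L : ℕ) : ℝ≥0∞) = ENNReal.ofReal (g L) := by
      simp [ENNReal.ofReal_natCast]
    have he2 : ((L : ℕ) : ℝ≥0∞) * μ.toMeasure B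
        = ENNReal.ofReal (L * (μ.toMeasure B).toReal) := by
      rw [ENNReal.ofReal_mul (by positivity)]
      rw [ENNReal.ofReal_toReal hμBne]
      simp [ENNReal.ofReal_natCast]
    rw [he1, he2]
    exact (ENNReal.ofReal_lt_ofReal_iff (by positivity)).mpr hgL
  obtain ⟨w, hw⟩ := exists_many_visits hT hμ Metric.isOpen_ball.measurableSet hbound
  -- glue k+2 copies of the orbit segment of w
  have hy : ∀ k : ℕ, ∃ y : Y, ∀ j < k + 2, T^[j * L] y ∈ mistakeBall T g w L δ := by
    intro k
    obtain ⟨y, hy⟩ := hglue (k+2) (fun _ => w) (fun _ => δ) (fun _ => L) (by omega)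
      (fun _ _ => hδpos) (fun j _ => hLm)
    refine ⟨y, fun j hj => ?_⟩
    have hmem := Set.mem_iInter₂.mp hy j (Finset.mem_range.mpr hj)
    rw [Set.mem_preimage] at hmem
    have hsum : ∑ _i ∈ Finset.range j, L = j * L := by
      simp [Finset.sum_const, Finset.card_range, Nat.smul_one_eq_cast]
    rwa [hsum] at hmem
  -- each block contains a good time
  have hgood : ∀ (y : Y) (j : ℕ), T^[j * L] y ∈ mistakeBall T g w L δ →
      ∃ t, j * L ≤ t ∧ t < j * L + L ∧ T^[t] y ∈ Metric.closedBall x (ε/2) := by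
    intro y j hmem
    obtain ⟨Λ, hΛsub, hΛcard, hΛdist⟩ := hmem
    have hfil : g L < ((Finset.range L).filter fun i => T^[i] w ∈ B).card := by
      simpa [visitCount, hBdef] using hw
    obtain ⟨i, hiP, hiΛ⟩ : ∃ i, (i ∈ (Finset.range L).filter fun i => T^[i] w ∈ B) ∧ i ∈ Λ := by
      by_contra hcon
      push_neg at hcon
      have hsub : ((Finset.range L).filter fun i => T^[i] w ∈ B) ⊆ Finset.range L \ Λ := by
        intro i hi
        rw [Finset.mem_sdiff]
        exact ⟨Finset.filter_subset _ _ hi, hcon i hi⟩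
      exact absurd ((Finset.card_le_card hsub).trans hΛcard) (not_le.mpr hfil)
    simp only [Finset.mem_filter, Finset.mem_range] at hiP
    refine ⟨i + j * L, by omega, by omega, ?_⟩
    rw [Metric.mem_closedBall, Function.iterate_add_apply]
    have h1 := hΛdist i hiΛ
    have h2 : dist (T^[i] w) x < δ := by
      have := hiP.2
      rwa [hBdef, Metric.mem_ball] at this
    calc dist (T^[i] (T^[j * L] y)) x
        ≤ dist (T^[i] (T^[j * L] y)) (T^[i] w) + dist (T^[i] w) x := dist_triangle _ _ _
      _ ≤ δ + δ := by
          rw [dist_comm]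
          exact add_le_add h1 h2.le
      _ = ε / 2 := by rw [hδdef]; ring
  -- the syndetic target sets
  set F := Metric.closedBall x (ε/2) with hFdef
  set N := 2 * L with hNdef
  set Sn : ℕ → Set Y := fun n => ⋃ t ∈ Finset.Icc n (n + N), T^[t] ⁻¹' F with hSndef
  have hSclosed : ∀ n, IsClosed (Sn n) := fun n =>
    Set.Finite.isClosed_biUnion (Finset.finite_toSet _)
      (fun t _ => Metric.isClosed_closedBall.preimage (hT.iterate t))
  choose y hy' using hy
  have hyS : ∀ n k : ℕ, n ≤ k * L → y k ∈ Sn n := by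
    intro n k hk
    have hdiv : n / L ≤ k := by
      have := Nat.div_le_div_right (c := L) hk
      rwa [Nat.mul_div_cancel _ (by omega)] at this
    obtain ⟨t, ht1, ht2, ht3⟩ := hgood (y k) (n / L + 1) (hy' k _ (by omega))
    refine Set.mem_iUnion₂.mpr ⟨t, ?_, ht3⟩
    rw [Finset.mem_Icc]
    have h1 : L * (n / L) + n % L = n := Nat.div_add_mod n L
    have h2 : n % L < L := Nat.mod_lt _ (by omega)
    have h3 : (n / L) * L ≤ n := Nat.div_mul_le_self n L
    constructor
    · nlinarith
    · rw [hNdef]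
      nlinarith
  obtain ⟨z, -, φ, hφ, hz⟩ := isCompact_univ.tendsto_subseq (x := y) (fun n => Set.mem_univ _)
  have hzS : ∀ n, z ∈ Sn n := by
    intro n
    refine (hSclosed n).mem_of_tendsto hz ?_
    filter_upwards [Filter.eventually_ge_atTop n] with k hk
    exact hyS n (φ k) (le_trans (le_trans hk hφ.le_apply) (Nat.le_mul_of_pos_right _ (by omega)))
  set A : Set Y := ⋂ n, Sn n with hAdef
  have hAne : A.Nonempty := ⟨z, Set.mem_iInter.mpr hzS⟩
  have hAcl : IsClosed A := isClosed_iInter hSclosed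
  have hAinv : Set.MapsTo T A A := by
    intro v hv
    rw [Set.mem_iInter]
    intro n
    obtain ⟨t, htmem, htF⟩ := Set.mem_iUnion₂.mp (Set.mem_iInter.mp hv (n+1))
    rw [Finset.mem_Icc] at htmem
    refine Set.mem_iUnion₂.mpr ⟨t - 1, Finset.mem_Icc.mpr ⟨by omega, by omega⟩, ?_⟩
    rw [Set.mem_preimage]
    have h1 : T^[t - 1] (T v) = T^[t] v := by
      rw [← Function.iterate_succ_apply]
      congr 1
      omega
    rw [h1]
    exact htF
  obtain ⟨M, hMne, hMA, hMinv, hMap⟩ := exists_ap_subset hT hAne hAcl hAinv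
  obtain ⟨z', hz'⟩ := hMne
  obtain ⟨t, htmem, htF⟩ := Set.mem_iUnion₂.mp (Set.mem_iInter.mp (hMA hz') 0)
  refine ⟨T^[t] z', hMap (hMinv.iterate t hz'), ?_⟩
  rw [Set.mem_preimage, hFdef, Metric.mem_closedBall] at htF
  rwa [dist_comm]

end PartB

section PartA

variable {Y : Type*} [MetricSpace Y] [MeasurableSpace Y] [BorelSpace Y]

/-- Every almost periodic point lies in the support of some invariant probability
measure (Krylov–Bogolyubov along the orbit, via the content of visit frequencies). -/
lemma ap_mem_center [CompactSpace Y] {T : Y → Y} (hT : Continuous T) {x : Y}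
    (hx : x ∈ almostPeriodicPts T) :
    ∃ μ : MeasureTheory.ProbabilityMeasure Y, InvariantProb T μ ∧ x ∈ measSupp μ := by
  haveI hProb : MeasureTheory.IsProbabilityMeasure ((apContent T x).measure) :=
    ⟨apContent_measure_univ T x⟩
  refine ⟨⟨(apContent T x).measure, hProb⟩, ?_, ?_⟩
  · exact apContent_measure_map T x hT
  · intro U hU hxU
    show 0 < (apContent T x).measure U
    obtain ⟨δ, hδpos, hδU⟩ := Metric.isOpen_iff.mp hU x hxU
    set K := Metric.closedBall x (δ/2) with hK
    have hKU : K ⊆ U := (Metric.closedBall_subset_ball (by linarith)).trans hδU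
    have hKc : IsCompact K := Metric.isClosed_closedBall.isCompact
    obtain ⟨N, hN⟩ := hx (Metric.ball x (δ/2)) Metric.isOpen_ball
      (Metric.mem_ball_self (by linarith))
    have hsynd : ∀ n : ℕ, ∃ k, n ≤ k ∧ k ≤ n + N ∧ T^[k] x ∈ K := by
      intro n
      obtain ⟨k, h1, h2, h3⟩ := hN n
      exact ⟨k, h1, h2, Metric.ball_subset_closedBall h3⟩
    have hfreq : 0 < freq T x K := freq_pos_of_syndetic T x hsynd
    rw [MeasureTheory.Content.measure_apply _ hU.measurableSet,
      (apContent T x).outerMeasure_of_isOpen U hU]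
    refine lt_of_lt_of_le ?_ ((apContent T x).le_innerContent ⟨K, hKc⟩ ⟨U, hU⟩ hKU)
    show (0:ℝ≥0∞) < ((apContent T x).toFun ⟨K, hKc⟩ : ℝ≥0∞)
    rw [ENNReal.coe_pos]
    exact NNReal.coe_pos.mp hfreq

end PartA


end AuxiliaryDevelopment

/-- Under the almost product property, the measure center equals the
closure of the set of almost periodic points. -/
theorem measureCenter_eq_closure_almostPeriodic [CompactSpace X]
    (T : X → X) (hT : Continuous T) (hAPP : AlmostProductProperty T) :
    measureCenter T = closure (almostPeriodicPts T) := by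
  apply Set.Subset.antisymm
  · refine closure_minimal ?_ isClosed_closure
    exact Set.iUnion₂_subset fun μ hμ => measSupp_subset_closure_ap hT hAPP hμ
  · refine closure_minimal ?_ isClosed_closure
    intro x hx
    obtain ⟨μ, hinv, hsupp⟩ := ap_mem_center hT hx
    exact subset_closure (Set.mem_iUnion₂.mpr ⟨μ, hinv, hsupp⟩)
end

section
/- Let (X,T) be a topological dynamical system and suppose f: X → ℝ is continuous such that the unique f-maximizing measure is the point mass at a periodic orbit orb(x₀,T). Then the set S_f^{MR} of initial points of measure-recurrent f-optimal orbits equals ⋃_{i=0}^∞ T^{-i}(orb(x₀,T)), and in particular the upper capacity topological entropy of T on S_f^{MR} is 0 when T is invertible (so that each T^{-i}orb(x₀,T) is finite) — more precisely, h_top^{UC}(T, S_f^{MR}) = 0 whenever S_f^{MR} is a countable union of preimages of a single periodic orbit under a homeomorphism T. -/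
open Filter MeasureTheory Topology
open scoped ENNReal

variable {X : Type*} [MetricSpace X]


variable [MeasurableSpace X] [BorelSpace X]

section Aux


lemma periodic_shift_one {M : Type*} [AddCommMonoid M] {a : ℕ → M} {p : ℕ} (hp : 1 ≤ p)
    (ha : ∀ n, a (n + p) = a n) :
    ∑ i ∈ Finset.range p, a (i + 1) = ∑ i ∈ Finset.range p, a i := by
  obtain ⟨m, rfl⟩ : ∃ m, p = m + 1 := ⟨p - 1, by omega⟩
  rw [Finset.sum_range_succ, Finset.sum_range_succ' a m]
  congr 1
  have := ha 0
  simpa using this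

/-- shift sums of periodic sequences in any AddCommMonoid -/
lemma periodic_shift_sum {M : Type*} [AddCommMonoid M] {a : ℕ → M} {p : ℕ} (hp : 1 ≤ p)
    (ha : ∀ n, a (n + p) = a n) (k : ℕ) :
    ∑ i ∈ Finset.range p, a (i + k) = ∑ i ∈ Finset.range p, a i := by
  induction k with
  | zero => simp
  | succ k ih =>
    have h1 : ∑ i ∈ Finset.range p, a (i + (k + 1))
        = ∑ i ∈ Finset.range p, (fun j => a (j + k)) (i + 1) := by
      apply Finset.sum_congr rfl; intros; simp only []; ring_nf
    have h2 := periodic_shift_one (a := fun j => a (j + k)) hp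
      (fun n => by beta_reduce; rw [show n + p + k = n + k + p by ring, ha])
    rw [h1]
    exact h2.trans ih

lemma cesaro_periodic {a : ℕ → ℝ} {p : ℕ} (hp : 1 ≤ p) (ha : ∀ n, a (n + p) = a n) :
    Tendsto (fun n : ℕ => (∑ i ∈ Finset.range n, a i) / n) atTop
      (𝓝 ((∑ i ∈ Finset.range p, a i) / p)) := by
  have hp0 : (p : ℝ) ≠ 0 := by positivity
  set S : ℝ := ∑ i ∈ Finset.range p, a i with hS
  set L : ℝ := S / p with hL
  set g : ℕ → ℝ := fun n => (∑ i ∈ Finset.range n, a i) - n * L with hg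
  have hgper : ∀ n, g (n + p) = g n := by
    intro n
    have hsum : ∑ i ∈ Finset.range (n + p), a i
        = (∑ i ∈ Finset.range n, a i) + S := by
      rw [Finset.sum_range_add, hS]
      congr 1
      rw [← periodic_shift_sum hp ha n]
      apply Finset.sum_congr rfl; intros; ring_nf
    simp only [hg, hsum]
    have : (p : ℝ) * L = S := by rw [hL]; field_simp
    push_cast
    linarith
  have hgmod : ∀ q r, g (r + q * p) = g r := by
    intro q
    induction q with
    | zero => simp
    | succ q ih => intro r; rw [show r + (q+1) * p = (r + q * p) + p by ring, hgper, ih]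
  have hCnn : 0 ≤ ∑ i ∈ Finset.range p, |g i| :=
    Finset.sum_nonneg fun i _ => abs_nonneg _
  have hgbd : ∀ n, |g n| ≤ ∑ i ∈ Finset.range p, |g i| := by
    intro n
    have h1 : g n = g (n % p) := by
      conv_lhs => rw [show n = n % p + (n / p) * p by rw [Nat.mod_add_div']]
      exact hgmod _ _
    rw [h1]
    exact Finset.single_le_sum (f := fun i => |g i|) (fun i _ => abs_nonneg _)
      (Finset.mem_range.mpr (Nat.mod_lt _ (by omega)))
  set C : ℝ := ∑ i ∈ Finset.range p, |g i| with hC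
  have hgo : Tendsto (fun n : ℕ => g n / n) atTop (𝓝 0) := by
    apply squeeze_zero_norm (fun n => ?_) (tendsto_const_div_atTop_nhds_zero_nat C)
    rcases Nat.eq_zero_or_pos n with h | h
    · simp [h, hCnn]
    · rw [Real.norm_eq_abs, abs_div, abs_of_nonneg (by positivity : (0:ℝ) ≤ (n:ℝ))]
      gcongr
      exact hgbd n
  have key : Tendsto (fun n : ℕ => L + g n / n) atTop (𝓝 L) := by
    simpa using tendsto_const_nhds.add hgo
  have heq : ∀ᶠ n : ℕ in atTop, L + g n / n = (∑ i ∈ Finset.range n, a i) / n := by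
    filter_upwards [eventually_ge_atTop 1] with n hn
    have hn0 : (n : ℝ) ≠ 0 := by positivity
    rw [hg]
    field_simp
    ring
  rw [show S / p = L from rfl] at *
  exact (key.congr' heq)

end Aux

section Meas
open BoundedContinuousFunction

variable [MeasurableSpace X] [BorelSpace X]
set_option linter.unusedSectionVars false

lemma integrable_dirac'' (g : X → ℝ) (a : X) : Integrable g (Measure.dirac a) := by
  have h : g =ᵐ[Measure.dirac a] fun _ => g a := by
    rw [Filter.EventuallyEq, MeasureTheory.ae_dirac_eq]
    exact Filter.eventually_pure.mpr rfl
  exact (integrable_const (g a)).congr h.symm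

lemma integral_avg_dirac (g : X → ℝ) (c : ℕ → X) (m : ℕ) :
    ∫ x, g x ∂((m : ℝ≥0∞)⁻¹ • ∑ i ∈ Finset.range m, Measure.dirac (c i))
      = (∑ i ∈ Finset.range m, g (c i)) / m := by
  rw [integral_smul_measure, integral_finset_sum_measure (fun i _ => integrable_dirac'' g (c i))]
  simp only [integral_dirac, ENNReal.toReal_inv, ENNReal.toReal_natCast, smul_eq_mul]
  rw [inv_mul_eq_div]

lemma integral_empirical (g : X → ℝ) (T : X → X) (x : X) (n : ℕ) :
    ∫ y, g y ∂(empirical T x n : Measure X)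
      = (∑ j ∈ Finset.range (n + 1), g (T^[j] x)) / (n + 1) := by
  have h : (empirical T x n : Measure X)
      = ((n + 1 : ℕ) : ℝ≥0∞)⁻¹ • ∑ j ∈ Finset.range (n + 1), Measure.dirac (T^[j] x) := by
    simp [empirical]
  rw [h, integral_avg_dirac]
  push_cast
  ring

lemma probmeasure_ext_integral {μ ν : Measure X} [IsFiniteMeasure μ] [IsFiniteMeasure ν]
    (h : ∀ g : X →ᵇ ℝ, ∫ x, g x ∂μ = ∫ x, g x ∂ν) : μ = ν := by
  apply ext_of_forall_lintegral_eq_of_IsFiniteMeasure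
  intro g
  have lip : LipschitzWith 1 (fun r : NNReal => (r : ℝ)) := isometry_subtype_coe.lipschitz
  set gr : X →ᵇ ℝ := BoundedContinuousFunction.comp _ lip g with hgr
  have hco : ∀ x, gr x = (g x : ℝ) := fun x => rfl
  have h1 : ∫⁻ x, g x ∂μ = ENNReal.ofReal (∫ x, gr x ∂μ) :=
    lintegral_coe_eq_integral (fun x => g x) (gr.integrable μ)
  have h2 : ∫⁻ x, g x ∂ν = ENNReal.ofReal (∫ x, gr x ∂ν) :=
    lintegral_coe_eq_integral (fun x => g x) (gr.integrable ν)
  rw [h1, h2, h gr]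
end Meas


section Ent
variable {X : Type*} [MetricSpace X]

lemma ucEntropy_finite (T : X → X) {Z : Set X} (hZ : Z.Finite) : ucEntropy T Z = 0 := by
  set N : ℕ := hZ.toFinset.card with hN
  have hsep : ∀ (n : ℕ) (ε : ℝ), sepNum T Z n ε ≤ N := by
    intro n ε
    apply csSup_le'
    rintro k ⟨E, hEZ, -, rfl⟩
    apply Finset.card_le_card
    intro x hx
    exact hZ.mem_toFinset.mpr (hEZ hx)
  have key : ∀ ε : ℝ, 0 < ε →
      Filter.limsup (fun n : ℕ => ((Real.log (sepNum T Z n ε) / n : ℝ) : EReal))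
        Filter.atTop = (0 : EReal) := by
    intro ε hε
    have hge : ∀ n : ℕ, 0 ≤ Real.log (sepNum T Z n ε) := by
      intro n
      rcases Nat.eq_zero_or_pos (sepNum T Z n ε) with h | h
      · simp [h]
      · exact Real.log_nonneg (by exact_mod_cast h)
    have hle : ∀ n : ℕ, Real.log (sepNum T Z n ε) ≤ Real.log (N + 1) := by
      intro n
      rcases Nat.eq_zero_or_pos (sepNum T Z n ε) with h | h
      · rw [h]
        simpa using Real.log_nonneg (by push_cast; linarith : (1:ℝ) ≤ (N:ℝ) + 1)
      · apply Real.log_le_log (by exact_mod_cast h)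
        have := hsep n ε
        push_cast
        have : (sepNum T Z n ε : ℝ) ≤ N := by exact_mod_cast this
        linarith
    have ht : Tendsto (fun n : ℕ => Real.log (sepNum T Z n ε) / n) atTop (𝓝 0) := by
      apply tendsto_of_tendsto_of_tendsto_of_le_of_le' tendsto_const_nhds
        (tendsto_const_div_atTop_nhds_zero_nat (Real.log (N + 1)))
      · exact Eventually.of_forall fun n => div_nonneg (hge n) (Nat.cast_nonneg n)
      · filter_upwards [eventually_ge_atTop 1] with n hn
        have hn0 : (0:ℝ) < n := by exact_mod_cast hn
        exact (div_le_div_iff_of_pos_right hn0).mpr (hle n)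
    have htE : Tendsto (fun n : ℕ => ((Real.log (sepNum T Z n ε) / n : ℝ) : EReal))
        atTop (𝓝 (0 : EReal)) := by
      have := (continuous_coe_real_ereal.tendsto (0:ℝ)).comp ht
      exact this
    exact htE.limsup_eq
  apply le_antisymm
  · exact iSup₂_le fun ε hε => (key ε hε).le
  · calc (0 : EReal) = _ := (key 1 one_pos).symm
      _ ≤ ucEntropy T Z := by
          apply le_iSup₂ (f := fun (ε : ℝ) (_ : 0 < ε) =>
            Filter.limsup (fun n : ℕ =>
              ((Real.log (sepNum T Z n ε) / n : ℝ) : EReal)) Filter.atTop) 1 one_pos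

end Ent

/-- If the unique `f`-maximizing measure is the periodic-orbit measure
of a periodic point `x₀` of period `p` and `T` is invertible, then the set of initial
points of measure-recurrent `f`-optimal orbits is `⋃_{i≥0} T^{-i}(orb(x₀,T))`, and its
upper capacity entropy vanishes. -/
theorem mrOptimal_eq_preimages_of_periodic_maximizing [CompactSpace X]
    (T : X → X) (hT : Continuous T) (hTbij : Function.Bijective T)
    (f : X → ℝ) (hf : Continuous f)
    (x₀ : X) (p : ℕ) (hp : 1 ≤ p) (hper : T^[p] x₀ = x₀)
    (hmax : ∀ μ : ProbabilityMeasure X, InvariantProb T μ →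
      ((∫ x, f x ∂μ.toMeasure = birkhoffSup T f) ↔
        μ.toMeasure
          = (p : ℝ≥0∞)⁻¹ • ∑ i ∈ Finset.range p, Measure.dirac (T^[i] x₀))) :
    mrOptimal T f = (⋃ i : ℕ, T^[i] ⁻¹' {y : X | ∃ j < p, T^[j] x₀ = y}) ∧
      ucEntropy T (mrOptimal T f) = 0 := by
  classical
  have hTm : Measurable T := hT.measurable
  set O : Set X := {y : X | ∃ j < p, T^[j] x₀ = y} with hO
  have hiter : ∀ n : ℕ, T^[n + p] x₀ = T^[n] x₀ := fun n => by
    rw [Function.iterate_add_apply, hper]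
  have hOfin : O.Finite := by
    have : O ⊆ (fun j : ℕ => T^[j] x₀) '' Set.Iio p := by
      rintro y ⟨j, hj, rfl⟩
      exact ⟨j, hj, rfl⟩
    exact Set.Finite.subset ((Set.finite_Iio p).image _) this
  have hmulp : ∀ (q j : ℕ), T^[j + q * p] x₀ = T^[j] x₀ := by
    intro q
    induction q with
    | zero => simp
    | succ q ih =>
      intro j
      rw [show j + (q + 1) * p = j + q * p + p by ring, hiter, ih]
  have hmemO : ∀ j : ℕ, T^[j] x₀ ∈ O := by
    intro j
    refine ⟨j % p, Nat.mod_lt _ (by omega), ?_⟩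
    conv_rhs => rw [show j = j % p + (j / p) * p by rw [Nat.mod_add_div']]
    exact (hmulp _ _).symm
  -- the periodic-orbit measure
  set μm : Measure X := (p : ℝ≥0∞)⁻¹ • ∑ i ∈ Finset.range p, Measure.dirac (T^[i] x₀)
    with hμm
  have hpE0 : (p : ℝ≥0∞) ≠ 0 := Nat.cast_ne_zero.mpr (by omega)
  have hpEt : (p : ℝ≥0∞) ≠ ⊤ := ENNReal.natCast_ne_top p
  have hμprob : IsProbabilityMeasure μm := by
    constructor
    rw [hμm, Measure.smul_apply, Measure.finset_sum_apply]
    simp only [Measure.dirac_apply' _ MeasurableSet.univ, Set.indicator_of_mem (Set.mem_univ _),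
      Pi.one_apply, Finset.sum_const, Finset.card_range, nsmul_eq_mul, mul_one, smul_eq_mul]
    exact ENNReal.inv_mul_cancel hpE0 hpEt
  set μ₀ : ProbabilityMeasure X := ⟨μm, hμprob⟩ with hμ₀
  have hμ₀coe : (μ₀ : Measure X) = μm := rfl
  -- invariance of μm
  have hindper : ∀ (s : Set X) (n : ℕ),
      (fun i => s.indicator (fun _ => (1:ℝ≥0∞)) (T^[i] x₀)) (n + p)
        = s.indicator (fun _ => (1:ℝ≥0∞)) (T^[n] x₀) := by
    intro s n
    simp only [hiter n]
  have hinv : μm.map T = μm := by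
    ext s hs
    rw [Measure.map_apply hTm hs]
    rw [hμm, Measure.smul_apply, Measure.smul_apply, Measure.finset_sum_apply,
      Measure.finset_sum_apply]
    congr 1
    have h1 : ∀ i, Measure.dirac (T^[i] x₀) (T ⁻¹' s)
        = s.indicator (fun _ => (1:ℝ≥0∞)) (T^[i + 1] x₀) := by
      intro i
      rw [Measure.dirac_apply' _ (hTm hs)]
      have hmem : T^[i] x₀ ∈ T ⁻¹' s ↔ T^[i + 1] x₀ ∈ s := by
        rw [Set.mem_preimage, Function.iterate_succ_apply']
      rw [Set.indicator_apply, Set.indicator_apply, if_congr hmem rfl rfl]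
      simp
    calc ∑ i ∈ Finset.range p, Measure.dirac (T^[i] x₀) (T ⁻¹' s)
        = ∑ i ∈ Finset.range p,
            (fun j => s.indicator (fun _ => (1:ℝ≥0∞)) (T^[j] x₀)) (i + 1) :=
          Finset.sum_congr rfl fun i _ => h1 i
      _ = ∑ i ∈ Finset.range p, s.indicator (fun _ => (1:ℝ≥0∞)) (T^[i] x₀) :=
          periodic_shift_one (a := fun j => s.indicator (fun _ => (1:ℝ≥0∞)) (T^[j] x₀)) hp (hindper s)
      _ = ∑ i ∈ Finset.range p, Measure.dirac (T^[i] x₀) s :=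
          Finset.sum_congr rfl fun i _ => (Measure.dirac_apply' _ hs).symm
  have hinvP : InvariantProb T μ₀ := hinv
  have hβ : ∫ x, f x ∂μm = birkhoffSup T f := (hmax μ₀ hinvP).mpr rfl
  have hβval : birkhoffSup T f = (∑ i ∈ Finset.range p, f (T^[i] x₀)) / p := by
    rw [← hβ, hμm, integral_avg_dirac]
  -- orbit points are genuinely periodic
  have hxper : ∀ x, x ∈ O → T^[p] x = x := by
    rintro x ⟨k, hk, rfl⟩
    rw [← Function.iterate_add_apply, add_comm, Function.iterate_add_apply, hper]
  have hxiterper : ∀ x, T^[p] x = x → ∀ j : ℕ, T^[j + p] x = T^[j] x := by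
    intro x hx j
    rw [Function.iterate_add_apply, hx]
  -- sums over the orbit of x equal sums over the orbit of x₀
  have hshift : ∀ (g : X → ℝ) (k : ℕ),
      ∑ i ∈ Finset.range p, g (T^[i] (T^[k] x₀)) = ∑ i ∈ Finset.range p, g (T^[i] x₀) := by
    intro g k
    have hgper : ∀ n : ℕ, (fun i => g (T^[i] x₀)) (n + p) = g (T^[n] x₀) := by
      intro n; simp only [hiter n]
    rw [← periodic_shift_sum (a := fun i => g (T^[i] x₀)) hp hgper k]
    exact Finset.sum_congr rfl fun i _ => by rw [← Function.iterate_add_apply]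
  -- empirical measures of orbit points converge to μ₀
  have hemp : ∀ x, x ∈ O → Tendsto (fun n => empirical T x n) atTop (𝓝 μ₀) := by
    intro x hxO
    have hxp := hxper x hxO
    rw [ProbabilityMeasure.tendsto_iff_forall_integral_tendsto]
    intro g
    have hgper : ∀ j : ℕ, (fun j => g (T^[j] x)) (j + p) = g (T^[j] x) := by
      intro j; simp only [hxiterper x hxp j]
    have hc := cesaro_periodic (a := fun j => g (T^[j] x)) hp hgper
    have hval : (∑ i ∈ Finset.range p, g (T^[i] x)) / p = ∫ y, g y ∂(μ₀ : Measure X) := by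
      obtain ⟨k, hk, rfl⟩ := hxO
      rw [hμ₀coe, hμm, integral_avg_dirac, hshift (fun y => g y) k]
    rw [← hval]
    have hcomp := hc.comp (tendsto_add_atTop_nat 1)
    apply hcomp.congr
    intro n
    simp only [Function.comp_apply]
    rw [integral_empirical]
    norm_cast
  -- orbit points lie in the support of μ₀
  have hsupp : ∀ x, x ∈ O → x ∈ measSupp μ₀ := by
    rintro x ⟨k, hk, rfl⟩ U hU hxU
    have h1 : (1 : ℝ≥0∞) ≤ ∑ i ∈ Finset.range p, Measure.dirac (T^[i] x₀) U := by
      refine le_trans ?_ (Finset.single_le_sum (f := fun i => Measure.dirac (T^[i] x₀) U)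
        (fun i _ => zero_le) (Finset.mem_range.mpr hk))
      show (1 : ℝ≥0∞) ≤ Measure.dirac (T^[k] x₀) U
      rw [Measure.dirac_apply' _ hU.measurableSet, Set.indicator_of_mem hxU]
      simp
    have h2 : (μ₀ : Measure X) U = (p : ℝ≥0∞)⁻¹ * ∑ i ∈ Finset.range p,
        Measure.dirac (T^[i] x₀) U := by
      rw [hμ₀coe, hμm, Measure.smul_apply, Measure.finset_sum_apply, smul_eq_mul]
    calc (0 : ℝ≥0∞) < (p : ℝ≥0∞)⁻¹ * 1 := by
          rw [mul_one]
          exact ENNReal.inv_pos.mpr hpEt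
      _ ≤ (μ₀ : Measure X) U := by rw [h2]; exact mul_le_mul_right h1 _
  -- Birkhoff averages of orbit points converge to β(f)
  have hbirk : ∀ x, x ∈ O →
      Tendsto (fun n => (∑ i ∈ Finset.range n, f (T^[i] x)) / n) atTop
        (𝓝 (birkhoffSup T f)) := by
    intro x hxO
    have hxp := hxper x hxO
    have hfper : ∀ j : ℕ, (fun j => f (T^[j] x)) (j + p) = f (T^[j] x) := by
      intro j; simp only [hxiterper x hxp j]
    have hc := cesaro_periodic (a := fun j => f (T^[j] x)) hp hfper
    have hval : (∑ i ∈ Finset.range p, f (T^[i] x)) / p = birkhoffSup T f := by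
      obtain ⟨k, hk, rfl⟩ := hxO
      rw [hβval, hshift f k]
    rwa [hval] at hc
  -- forward inclusion O ⊆ mrOptimal
  have hOsub : O ⊆ mrOptimal T f := by
    intro x hxO
    exact ⟨⟨μ₀, hemp x hxO, hsupp x hxO⟩, hbirk x hxO⟩
  -- converse inclusion
  have hsubO : mrOptimal T f ⊆ O := by
    rintro x ⟨⟨ν, hν, hxsupp⟩, hbx⟩
    have hνinv : InvariantProb T ν := by
      show ν.toMeasure.map T = ν.toMeasure
      haveI : IsProbabilityMeasure (ν.toMeasure.map T) :=
        MeasureTheory.Measure.isProbabilityMeasure_map hTm.aemeasurable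
      apply probmeasure_ext_integral
      intro g
      rw [integral_map hTm.aemeasurable g.continuous.measurable.aestronglyMeasurable]
      set gT : BoundedContinuousFunction X ℝ := g.compContinuous ⟨T, hT⟩ with hgT
      have hA := ProbabilityMeasure.tendsto_iff_forall_integral_tendsto.mp hν gT
      have hB := ProbabilityMeasure.tendsto_iff_forall_integral_tendsto.mp hν g
      have heq : ∀ n : ℕ,
          ∫ y, gT y ∂(empirical T x n : Measure X) - ∫ y, g y ∂(empirical T x n : Measure X)
            = (g (T^[n + 1] x) - g x) / (n + 1) := by
        intro n
        rw [integral_empirical, integral_empirical, div_sub_div_same]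
        congr 1
        have h1 : ∀ j : ℕ, gT (T^[j] x) = (fun j => g (T^[j] x)) (j + 1) := by
          intro j
          show g (T (T^[j] x)) = g (T^[j + 1] x)
          rw [Function.iterate_succ_apply']
        have h2 : ∑ j ∈ Finset.range (n + 1), gT (T^[j] x)
            = ∑ j ∈ Finset.range (n + 1), (fun j => g (T^[j] x)) (j + 1) :=
          Finset.sum_congr rfl fun j _ => h1 j
        have h3 : ∑ j ∈ Finset.range (n + 1 + 1), g (T^[j] x)
            = (∑ j ∈ Finset.range (n + 1), (fun j => g (T^[j] x)) (j + 1)) + g (T^[0] x) :=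
          Finset.sum_range_succ' _ _
        have h4 : ∑ j ∈ Finset.range (n + 1 + 1), g (T^[j] x)
            = (∑ j ∈ Finset.range (n + 1), g (T^[j] x)) + g (T^[n + 1] x) :=
          Finset.sum_range_succ _ _
        simp only [Function.iterate_zero_apply] at h3
        rw [h2]
        linarith
      have hdiff : Tendsto (fun n : ℕ =>
          ∫ y, gT y ∂(empirical T x n : Measure X)
            - ∫ y, g y ∂(empirical T x n : Measure X)) atTop (𝓝 0) := by
        rw [tendsto_congr heq]
        apply squeeze_zero_norm (a := fun n : ℕ => (2 * ‖g‖) / (n + 1))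
        · intro n
          rw [Real.norm_eq_abs, abs_div, abs_of_nonneg (by positivity : (0:ℝ) ≤ (n:ℝ) + 1)]
          apply div_le_div_of_nonneg_right ?_ ?_
          · calc |g (T^[n + 1] x) - g x| ≤ |g (T^[n + 1] x)| + |g x| := abs_sub _ _
              _ ≤ ‖g‖ + ‖g‖ := add_le_add (g.norm_coe_le_norm _) (g.norm_coe_le_norm _)
              _ = 2 * ‖g‖ := by ring
          · positivity
        · have hc := (tendsto_const_div_atTop_nhds_zero_nat (2 * ‖g‖)).comp
            (tendsto_add_atTop_nat 1)
          apply hc.congr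
          intro n
          simp only [Function.comp]
          push_cast
          rfl
      have hA' : Tendsto (fun n : ℕ => ∫ y, gT y ∂(empirical T x n : Measure X)) atTop
          (𝓝 (∫ y, g y ∂(ν : Measure X))) := by
        have hadd := hdiff.add hB
        simp only [zero_add] at hadd
        apply hadd.congr
        intro n
        ring
      exact tendsto_nhds_unique hA hA'
    have hfν : ∫ y, f y ∂ν.toMeasure = birkhoffSup T f := by
      set F : BoundedContinuousFunction X ℝ := BoundedContinuousFunction.mkOfCompact ⟨f, hf⟩ with hF
      have hFco : ∀ y, F y = f y := fun y => rfl
      have h1 := ProbabilityMeasure.tendsto_iff_forall_integral_tendsto.mp hν F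
      have h2 : Tendsto (fun n : ℕ => ∫ y, F y ∂(empirical T x n : Measure X)) atTop
          (𝓝 (birkhoffSup T f)) := by
        have hcomp := hbx.comp (tendsto_add_atTop_nat 1)
        apply hcomp.congr
        intro n
        simp only [Function.comp_apply]
        rw [integral_empirical]
        simp only [hFco]
        norm_cast
      have h3 := tendsto_nhds_unique h1 h2
      simpa only [hFco] using h3
    have hν₀ : ν.toMeasure = μm := (hmax ν hνinv).mp hfν
    by_contra hxO
    have hpos := hxsupp Oᶜ hOfin.isClosed.isOpen_compl hxO
    rw [hν₀] at hpos
    have hzero : μm Oᶜ = 0 := by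
      rw [hμm, Measure.smul_apply, Measure.finset_sum_apply, smul_eq_mul]
      rw [Finset.sum_eq_zero, mul_zero]
      intro i _
      rw [Measure.dirac_apply' _ hOfin.isClosed.isOpen_compl.measurableSet,
        Set.indicator_of_notMem (by simp only [Set.notMem_compl_iff]; exact hmemO i)]
    rw [hzero] at hpos
    exact lt_irrefl _ hpos
  -- the union of preimages collapses to O
  have honestep : ∀ x : X, T x ∈ O → x ∈ O := by
    rintro x ⟨j, hj, hjx⟩
    obtain ⟨m, rfl⟩ : ∃ m, p = m + 1 := ⟨p - 1, by omega⟩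
    cases j with
    | zero =>
      simp only [Function.iterate_zero_apply] at hjx
      have hTeq : T (T^[m] x₀) = T x :=
        ((Function.iterate_succ_apply' T m x₀).symm.trans hper).trans hjx
      exact ⟨m, by omega, hTbij.injective hTeq⟩
    | succ j' =>
      have hTeq : T (T^[j'] x₀) = T x :=
        (Function.iterate_succ_apply' T j' x₀).symm.trans hjx
      exact ⟨j', by omega, hTbij.injective hTeq⟩
  have hstep : ∀ (i : ℕ) (x : X), T^[i] x ∈ O → x ∈ O := by
    intro i
    induction i with
    | zero => intro x hx; simpa using hx
    | succ i ih =>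
      intro x hx
      rw [Function.iterate_succ_apply] at hx
      exact honestep x (ih (T x) hx)
  have hunion : (⋃ i : ℕ, T^[i] ⁻¹' {y : X | ∃ j < p, T^[j] x₀ = y}) = O := by
    apply Set.Subset.antisymm
    · intro x hx
      obtain ⟨i, hi⟩ := Set.mem_iUnion.mp hx
      exact hstep i x hi
    · intro x hx
      exact Set.mem_iUnion.mpr ⟨0, by simpa [hO] using hx⟩
  have hmain : mrOptimal T f = O := Set.Subset.antisymm hsubO hOsub
  constructor
  · rw [hunion, hmain]
  · rw [hmain]
    exact ucEntropy_finite T hOfin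
end
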